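/- arXiv:1705.09131 — 4 statements merged into one kernel-verified Lean document; each statement's English description precedes it below -/
import Mathlib

section
/- The image of the continuous homomorphism from the additive group of p-adic integers Z_p to the unit group of (Z/p)[[x]] sending 1 to 1-x (i.e., α maps to (1-x)^α) is a compact subset of (Z/p)[[x]] of cardinality at most that of Z_p, and its image in (Z/p)[x]/(x^(p^i)) has exactly p^i elements. -/
/-- The `x`-adic topology on `(ℤ/p)[[x]]`: the topology of coefficientwise convergence,
induced from the product of discrete topologies via the coefficient functions. -/
noncomputable def psTop (p : ℕ) : TopologicalSpace (PowerSeries (ZMod p)) :=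
  TopologicalSpace.induced (fun f n => PowerSeries.coeff (R := ZMod p) n f)
    (@Pi.topologicalSpace ℕ (fun _ => ZMod p) (fun _ => ⊥))

open PowerSeries in
lemma coeff_one_sub_X_pow_pow (p q m : ℕ) (hq : 0 < q) :
    PowerSeries.coeff (R := ZMod p) q ((1 - PowerSeries.X ^ q) ^ m) = -(m : ZMod p) := by
  induction m with
  | zero => simp [PowerSeries.coeff_one, hq.ne']
  | succ m ih =>
    have h : (1 - X ^ q : PowerSeries (ZMod p)) ^ (m + 1)
        = (1 - X ^ q) ^ m - (1 - X ^ q) ^ m * X ^ q := by ring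
    have h2 := PowerSeries.coeff_mul_X_pow ((1 - X ^ q : PowerSeries (ZMod p)) ^ m) q 0
    rw [zero_add] at h2
    have h3 : PowerSeries.coeff (R := ZMod p) 0 ((1 - X ^ q : PowerSeries (ZMod p)) ^ m) = 1 := by
      rw [PowerSeries.coeff_zero_eq_constantCoeff, map_pow, map_sub, map_one, map_pow,
        PowerSeries.constantCoeff_X, zero_pow hq.ne', sub_zero, one_pow]
    rw [h, map_sub, ih, h2, h3]
    push_cast
    ring

open PowerSeries in
lemma key_not_dvd (p : ℕ) [Fact p.Prime] (i k : ℕ) (hk : 0 < k) (hki : k < p ^ i) :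
    ¬ ((PowerSeries.X : PowerSeries (ZMod p)) ^ p ^ i ∣
      ((1 - PowerSeries.X : PowerSeries (ZMod p)) ^ k - 1)) := by
  haveI hp : Fact p.Prime := ‹_›
  haveI : CharP (PowerSeries (ZMod p)) p :=
    charP_of_injective_ringHom (PowerSeries.C_injective (R := ZMod p)) p
  set j := k.factorization p with hj
  set m := k / p ^ j with hm
  have hkm : p ^ j * m = k := Nat.ordProj_mul_ordCompl_eq_self k p
  have hpm : ¬ p ∣ m := Nat.not_dvd_ordCompl hp.out hk.ne'
  have hji : j < i := by
    have h1 : p ^ j ≤ k := Nat.le_of_dvd hk (Nat.ordProj_dvd k p)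
    have h2 : p ^ j < p ^ i := lt_of_le_of_lt h1 hki
    exact (Nat.pow_lt_pow_iff_right hp.out.one_lt).mp h2
  have hfresh : ((1 : PowerSeries (ZMod p)) - X) ^ p ^ j = 1 - X ^ p ^ j := by
    rw [sub_pow_char_pow, one_pow]
  have hcoeff : PowerSeries.coeff (R := ZMod p) (p ^ j)
      (((1 - X : PowerSeries (ZMod p)) ^ k - 1)) = -(m : ZMod p) := by
    rw [← hkm, pow_mul, hfresh, map_sub,
      coeff_one_sub_X_pow_pow p (p ^ j) m (pow_pos hp.out.pos j),
      PowerSeries.coeff_one, if_neg (pow_pos hp.out.pos j).ne', sub_zero]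
  intro hdvd
  rw [PowerSeries.X_pow_dvd_iff] at hdvd
  have h0 := hdvd (p ^ j) (Nat.pow_lt_pow_right hp.out.one_lt hji)
  rw [hcoeff, neg_eq_zero] at h0
  exact hpm ((ZMod.natCast_eq_zero_iff m p).mp h0)

/-- Let `τ` be the continuous homomorphism `ℤ_p → ((ℤ/p)[[x]])ˣ` with `τ(1) = 1 - x`
(i.e. `α ↦ (1-x)^α`; we quantify over multiplicative, continuous `τ` with `τ(1) = 1-x`).
Its image is a compact subset of `(ℤ/p)[[x]]` of cardinality at most that of `ℤ_p`, and its
image in `(ℤ/p)[x]/(x^(pⁱ))` has exactly `pⁱ` elements. -/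
theorem stmt2 (p : ℕ) [Fact p.Prime]
    (τ : Multiplicative ℤ_[p] →* PowerSeries (ZMod p))
    (hτ1 : τ (Multiplicative.ofAdd (1 : ℤ_[p])) = 1 - PowerSeries.X)
    (hτc : @Continuous _ _ _ (psTop p) (fun α : ℤ_[p] => τ (Multiplicative.ofAdd α))) :
    @IsCompact _ (psTop p) (Set.range fun α : ℤ_[p] => τ (Multiplicative.ofAdd α)) ∧
    Cardinal.mk (Set.range fun α : ℤ_[p] => τ (Multiplicative.ofAdd α)) ≤ Cardinal.mk ℤ_[p] ∧
    ∀ i : ℕ, Nat.card ((Ideal.Quotient.mk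
        (Ideal.span {(PowerSeries.X : PowerSeries (ZMod p)) ^ p ^ i})) ''
        (Set.range fun α : ℤ_[p] => τ (Multiplicative.ofAdd α))) = p ^ i := by
  haveI hp : Fact p.Prime := ‹_›
  haveI : CharP (PowerSeries (ZMod p)) p :=
    charP_of_injective_ringHom (PowerSeries.C_injective (R := ZMod p)) p
  set f : ℤ_[p] → PowerSeries (ZMod p) := fun α => τ (Multiplicative.ofAdd α) with hf
  have hnat : ∀ n : ℕ, f (n : ℤ_[p]) = (1 - PowerSeries.X) ^ n := by
    intro n
    have h1 : (Multiplicative.ofAdd ((n : ℤ_[p])))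
        = (Multiplicative.ofAdd (1 : ℤ_[p])) ^ n := by
      rw [← ofAdd_nsmul, nsmul_eq_mul, mul_one]
    simp only [hf, h1, map_pow, hτ1]
  have hadd : ∀ α β : ℤ_[p], f (α + β) = f α * f β := by
    intro α β
    simp only [hf, ofAdd_add, map_mul]
  -- constant coefficient is 1 everywhere
  have hconst : ∀ α : ℤ_[p], PowerSeries.constantCoeff (R := ZMod p) (f α) = 1 := by
    letI : TopologicalSpace (ZMod p) := ⊥
    haveI : DiscreteTopology (ZMod p) := ⟨rfl⟩
    letI := psTop p
    have hF : Continuous (fun g : PowerSeries (ZMod p) =>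
        (fun n => PowerSeries.coeff (R := ZMod p) n g)) := continuous_induced_dom
    have hc : Continuous fun α : ℤ_[p] => PowerSeries.coeff (R := ZMod p) 0 (f α) :=
      ((continuous_apply 0).comp hF).comp hτc
    have hSclosed : IsClosed {α : ℤ_[p] | PowerSeries.coeff (R := ZMod p) 0 (f α) = 1} :=
      IsClosed.preimage hc (isClosed_discrete {1})
    have hsub : Set.range (Nat.cast : ℕ → ℤ_[p]) ⊆
        {α : ℤ_[p] | PowerSeries.coeff (R := ZMod p) 0 (f α) = 1} := by
      rintro _ ⟨n, rfl⟩
      simp only [Set.mem_setOf_eq, hnat n, PowerSeries.coeff_zero_eq_constantCoeff, map_pow,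
        map_sub, map_one, PowerSeries.constantCoeff_X, sub_zero, one_pow]
    have huniv : (Set.univ : Set ℤ_[p]) ⊆
        {α : ℤ_[p] | PowerSeries.coeff (R := ZMod p) 0 (f α) = 1} := by
      rw [← (PadicInt.denseRange_natCast (p := p)).closure_eq]
      exact hSclosed.closure_subset_iff.mpr hsub
    intro α
    have := huniv (Set.mem_univ α)
    rwa [Set.mem_setOf_eq, PowerSeries.coeff_zero_eq_constantCoeff] at this
  refine ⟨?_, Cardinal.mk_range_le, ?_⟩
  · letI := psTop p
    exact isCompact_range hτc
  · intro i
    set N := p ^ i with hN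
    set I : Ideal (PowerSeries (ZMod p)) :=
      Ideal.span {(PowerSeries.X : PowerSeries (ZMod p)) ^ N} with hI
    set q := Ideal.Quotient.mk I with hq
    set g : ℤ_[p] → PowerSeries (ZMod p) ⧸ I := fun α => q (f α) with hg
    have hgadd : ∀ α β : ℤ_[p], g (α + β) = g α * g β := by
      intro α β; simp only [hg, hadd, map_mul]
    have hg1 : ∀ β : ℤ_[p], g ((p : ℤ_[p]) ^ i * β) = 1 := by
      intro β
      have h1 : ((p : ℤ_[p]) ^ i * β) = N • β := by
        rw [nsmul_eq_mul, hN]; push_cast; ring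
      have h2 : f ((p : ℤ_[p]) ^ i * β) = f β ^ N := by
        show τ (Multiplicative.ofAdd ((p : ℤ_[p]) ^ i * β)) = τ (Multiplicative.ofAdd β) ^ N
        rw [h1, ofAdd_nsmul, map_pow]
      have h3 : (PowerSeries.X : PowerSeries (ZMod p)) ^ N ∣ f β ^ N - 1 := by
        have hX : (PowerSeries.X : PowerSeries (ZMod p)) ∣ f β - 1 := by
          rw [PowerSeries.X_dvd_iff, map_sub, map_one, hconst β, sub_self]
        have : (f β - 1) ^ N = f β ^ N - 1 := by
          rw [hN, sub_pow_char_pow, one_pow]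
        rw [← this]
        exact pow_dvd_pow_of_dvd hX N
      have h4 : q (f β ^ N) = q 1 := by
        rw [Ideal.Quotient.eq, hI, Ideal.mem_span_singleton]
        exact h3
      show q (f ((p : ℤ_[p]) ^ i * β)) = 1
      rw [h2, h4, map_one]
    have hgn : ∀ n : ℕ, g (n : ℤ_[p]) = q ((1 - PowerSeries.X) ^ n) := by
      intro n; rw [hg]; exact congrArg q (hnat n)
    -- the image equals the range of a map on Fin N
    have himg : q '' (Set.range f)
        = Set.range (fun n : Fin N => q ((1 - PowerSeries.X) ^ (n : ℕ))) := by
      ext y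
      constructor
      · rintro ⟨_, ⟨α, rfl⟩, rfl⟩
        refine ⟨⟨α.appr i, α.appr_lt i⟩, ?_⟩
        obtain ⟨β, hβ⟩ := Ideal.mem_span_singleton.mp (α.appr_spec i)
        have hα : α = (α.appr i : ℤ_[p]) + (p : ℤ_[p]) ^ i * β := by
          rw [← hβ]; ring
        have hgα : g α = q ((1 - PowerSeries.X) ^ (α.appr i)) := by
          conv_lhs => rw [hα]
          rw [hgadd, hg1, mul_one, hgn]
        show q ((1 - PowerSeries.X) ^ (α.appr i)) = g α
        exact hgα.symm
      · rintro ⟨n, rfl⟩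
        exact ⟨f ((n : ℕ) : ℤ_[p]), ⟨_, rfl⟩, hgn (n : ℕ)⟩
    have hinj : Function.Injective
        (fun n : Fin N => q ((1 - PowerSeries.X) ^ (n : ℕ))) := by
      have key2 : ∀ a b : Fin N, (a : ℕ) ≤ (b : ℕ) →
          q ((1 - PowerSeries.X) ^ (a : ℕ)) = q ((1 - PowerSeries.X) ^ (b : ℕ)) → a = b := by
        intro a b hle heq
        by_contra hne
        have hlt : (a : ℕ) < (b : ℕ) := lt_of_le_of_ne hle (fun h => hne (Fin.ext h))
        have hdvd : (PowerSeries.X : PowerSeries (ZMod p)) ^ N ∣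
            (1 - PowerSeries.X) ^ (b : ℕ) - (1 - PowerSeries.X) ^ (a : ℕ) := by
          rw [← Ideal.mem_span_singleton, ← hI]
          exact Ideal.Quotient.eq.mp heq.symm
        have hfac : ((1 : PowerSeries (ZMod p)) - PowerSeries.X) ^ (b : ℕ)
            - (1 - PowerSeries.X) ^ (a : ℕ)
            = (1 - PowerSeries.X) ^ (a : ℕ)
              * ((1 - PowerSeries.X) ^ ((b : ℕ) - (a : ℕ)) - 1) := by
          rw [mul_sub, mul_one, ← pow_add]
          congr 2
          omega
        have hunit : IsUnit (((1 : PowerSeries (ZMod p)) - PowerSeries.X) ^ (a : ℕ)) := by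
          apply IsUnit.pow
          rw [PowerSeries.isUnit_iff_constantCoeff, map_sub, map_one,
            PowerSeries.constantCoeff_X, sub_zero]
          exact isUnit_one
        have hdvd2 : (PowerSeries.X : PowerSeries (ZMod p)) ^ N ∣
            (1 - PowerSeries.X) ^ ((b : ℕ) - (a : ℕ)) - 1 := by
          rw [hfac] at hdvd
          exact (hunit.dvd_mul_left).mp hdvd
        exact key_not_dvd p i ((b : ℕ) - (a : ℕ)) (by omega)
          (by have := b.isLt; omega) hdvd2
      intro a b hab
      rcases le_total (a : ℕ) (b : ℕ) with h | h
      · exact key2 a b h hab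
      · exact (key2 b a h hab.symm).symm
    rw [himg, Nat.card_range_of_injective hinj, Nat.card_eq_fintype_card, Fintype.card_fin]
end

section
/- Let K be the subfield of the field of formal Laurent series (Z/p)((x)) generated by the set { (1-x)^α : α ∈ Z_p }. Then the degree [ (Z/p)((x)) : K ] of the field extension is uncountable; equivalently, (Z/p)((x)) is not a countable-dimensional K-vector space. -/
open PowerSeries

namespace Stmt3

lemma exp_dom (c : ℕ) : ∃ k, c * (k+1) < 2^k := by
  refine ⟨2^(c+4), ?_⟩
  have h1 : c < 2^c := Nat.lt_two_pow_self
  have h2 : 2*c+5 < 2^(c+4) := by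
    calc 2*c+5 < 16*(c+1) := by omega
    _ ≤ 16 * 2^c := by
        have : c + 1 ≤ 2^c := h1
        omega
    _ = 2^(c+4) := by rw [pow_add]; ring
  calc c * (2^(c+4)+1) ≤ 2^c * (2^(c+4)+1) := Nat.mul_le_mul_right _ h1.le
    _ ≤ 2^c * 2^(c+5) := by
        have : (2:ℕ)^(c+4)+1 ≤ 2^(c+5) := by
          have h3 : (1:ℕ) ≤ 2^(c+4) := Nat.one_le_two_pow
          have h4 : (2:ℕ)^(c+5) = 2 * 2^(c+4) := by rw [pow_succ]; ring
          omega
        exact Nat.mul_le_mul_left _ this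
    _ = 2^(2*c+5) := by rw [← pow_add]; ring_nf
    _ < 2^(2^(c+4)) := Nat.pow_lt_pow_right (by norm_num) h2

lemma choose_k {p : ℕ} (hp : 2 ≤ p) (a m : ℕ) : ∃ k, a + m * (k+1) < p^k := by
  obtain ⟨k, hk⟩ := exp_dom (a + m)
  refine ⟨k, lt_of_lt_of_le (lt_of_le_of_lt ?_ hk) (Nat.pow_le_pow_left hp k)⟩
  have : (a + m) * (k+1) = a * (k+1) + m * (k+1) := by ring
  have h2 : a ≤ a * (k+1) := Nat.le_mul_of_pos_right _ (by omega)
  omega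

variable {p : ℕ} [Fact p.Prime]

lemma xdvd_iff {A : ℕ} {w : PowerSeries (ZMod p)} :
    (X : PowerSeries (ZMod p)) ^ A ∣ w ↔ (A : ℕ∞) ≤ w.order := by
  constructor
  · intro h
    refine PowerSeries.le_order _ _ fun i hi => ?_
    exact (PowerSeries.X_pow_dvd_iff.mp h) i (by exact_mod_cast hi)
  · intro h
    exact PowerSeries.X_pow_dvd_iff.mpr fun m hm =>
      PowerSeries.coeff_of_lt_order _ (lt_of_lt_of_le (by exact_mod_cast hm) h)

section Core

variable (T : ℤ_[p] → PowerSeries (ZMod p))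

noncomputable def valF {M : ℕ} (c : Fin M → ZMod p) (γ : Fin M → ℤ_[p]) :
    PowerSeries (ZMod p) :=
  ∑ u, PowerSeries.C (c u) * T (γ u)

variable (CC : ℕ → ℕ) (G : (B : ℕ) → Fin B → PowerSeries (ZMod p))

def Con (B M N : ℕ) (f : PowerSeries (ZMod p)) : Prop :=
  ∃ (c : Fin M → ZMod p) (γ : Fin M → ℤ_[p]) (d : Fin B → Fin M → ZMod p)
    (δ : Fin B → Fin M → ℤ_[p]),
    ¬ ((X : PowerSeries (ZMod p)) ^ (N+1) ∣ valF T c γ) ∧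
    valF T c γ * ((X : PowerSeries (ZMod p)) ^ (CC B) * f) =
      ∑ i, valF T (d i) (δ i) * G B i

variable (hT : ∀ (γ : ℤ_[p]) (k : ℕ),
  (X : PowerSeries (ZMod p)) ^ (p ^ k) ∣ (T γ - (1 - X) ^ (γ.appr k)))

include hT in
lemma T_congr {γ γ' : ℤ_[p]} {k : ℕ} (h : γ.appr k = γ'.appr k) :
    (X : PowerSeries (ZMod p)) ^ (p ^ k) ∣ (T γ - T γ') := by
  have h1 := hT γ k
  have h2 := hT γ' k
  rw [h] at h1
  simpa using h1.sub h2

include hT in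
lemma valF_congr {M k : ℕ} (c : Fin M → ZMod p) {γ γ' : Fin M → ℤ_[p]}
    (h : ∀ u, (γ u).appr k = (γ' u).appr k) :
    (X : PowerSeries (ZMod p)) ^ (p ^ k) ∣ (valF T c γ - valF T c γ') := by
  rw [valF, valF, ← Finset.sum_sub_distrib]
  refine Finset.dvd_sum fun u _ => ?_
  rw [← mul_sub]
  exact Dvd.dvd.mul_left (T_congr T hT (h u)) _

include hT in
lemma agree {B M N k : ℕ} {f₁ f₂ : PowerSeries (ZMod p)}
    {c : Fin M → ZMod p} {γ γ' : Fin M → ℤ_[p]} {d : Fin B → Fin M → ZMod p}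
    {δ δ' : Fin B → Fin M → ℤ_[p]}
    (hγ : ∀ u, (γ u).appr k = (γ' u).appr k)
    (hδ : ∀ i u, (δ i u).appr k = (δ' i u).appr k)
    (hq : ¬ ((X : PowerSeries (ZMod p)) ^ (N+1) ∣ valF T c γ))
    (e₁ : valF T c γ * ((X : PowerSeries (ZMod p)) ^ (CC B) * f₁) =
      ∑ i, valF T (d i) (δ i) * G B i)
    (e₂ : valF T c γ' * ((X : PowerSeries (ZMod p)) ^ (CC B) * f₂) =
      ∑ i, valF T (d i) (δ' i) * G B i) :
    (X : PowerSeries (ZMod p)) ^ (p ^ k - (N + CC B)) ∣ (f₁ - f₂) := by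
  by_cases hf : f₁ = f₂
  · simp [hf]
  have h1 : (X : PowerSeries (ZMod p)) ^ (p ^ k) ∣ (valF T c γ' - valF T c γ) :=
    valF_congr T hT c fun u => (hγ u).symm
  have h2 : (X : PowerSeries (ZMod p)) ^ (p ^ k) ∣
      ((∑ i, valF T (d i) (δ i) * G B i) - ∑ i, valF T (d i) (δ' i) * G B i) := by
    rw [← Finset.sum_sub_distrib]
    refine Finset.dvd_sum fun i _ => ?_
    rw [← sub_mul]
    exact (valF_congr T hT (d i) fun u => hδ i u).mul_right _
  have key : valF T c γ * ((X : PowerSeries (ZMod p)) ^ (CC B) * (f₁ - f₂)) =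
      ((∑ i, valF T (d i) (δ i) * G B i) - ∑ i, valF T (d i) (δ' i) * G B i)
      + (valF T c γ' - valF T c γ) * ((X : PowerSeries (ZMod p)) ^ (CC B) * f₂) := by
    linear_combination e₁ - e₂
  have hdvd : (X : PowerSeries (ZMod p)) ^ (p ^ k) ∣
      valF T c γ * ((X : PowerSeries (ZMod p)) ^ (CC B) * (f₁ - f₂)) := by
    rw [key]
    exact dvd_add h2 (h1.mul_right _)
  have horder := xdvd_iff.mp hdvd
  rw [PowerSeries.order_mul, PowerSeries.order_mul, PowerSeries.order_X_pow] at horder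
  have hv0 : valF T c γ ≠ 0 := fun h0 => hq (by simp [h0])
  have hf0 : f₁ - f₂ ≠ 0 := sub_ne_zero.mpr hf
  have ha : ((valF T c γ).order.toNat : ℕ∞) = (valF T c γ).order :=
    ENat.coe_toNat (lt_top_iff_ne_top.mp (PowerSeries.order_finite_iff_ne_zero.mpr hv0))
  have hb : ((f₁ - f₂).order.toNat : ℕ∞) = (f₁ - f₂).order :=
    ENat.coe_toNat (lt_top_iff_ne_top.mp (PowerSeries.order_finite_iff_ne_zero.mpr hf0))
  set a := (valF T c γ).order.toNat with hadef
  set b := (f₁ - f₂).order.toNat with hbdef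
  have haN : a ≤ N := by
    by_contra hcon
    refine hq (xdvd_iff.mpr ?_)
    rw [← ha, Nat.cast_le]
    omega
  rw [← ha, ← hb] at horder
  have harith : p ^ k ≤ a + (CC B + b) := by
    rw [← Nat.cast_add, ← Nat.cast_add, Nat.cast_le] at horder
    exact horder
  refine xdvd_iff.mpr ?_
  rw [← hb, Nat.cast_le]
  omega

include hT in
lemma step (B M N dd : ℕ) (q : ℕ → ZMod p) :
    ∃ (P : ℕ) (q' : ℕ → ZMod p), dd < P ∧ (∀ n, n < dd → q' n = q n) ∧
      ∀ f : ℕ → ZMod p, (∀ n, n < P → f n = q' n) →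
        ¬ Con T CC G B M N (PowerSeries.mk f) := by
  have hp2 : 2 ≤ p := (Fact.out : p.Prime).two_le
  obtain ⟨k, hk⟩ := choose_k hp2 (N + CC B + dd + 1) (M * (B+1))
  set P : ℕ := p ^ k - (N + CC B) with hP
  have hdP : dd < P := by omega
  have hwin : (k+1) * (M * (B+1)) < P - dd := by
    have : M * (B+1) * (k+1) = (k+1) * (M * (B+1)) := by ring
    omega
  classical
  -- the class of a witness
  let CT := ((Fin M → ZMod p × Fin (p^k)) × (Fin B → Fin M → ZMod p × Fin (p^k)))
  let classOf : (Fin M → ZMod p) → (Fin M → ℤ_[p]) → (Fin B → Fin M → ZMod p) →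
      (Fin B → Fin M → ℤ_[p]) → CT := fun c γ d δ =>
    (fun u => (c u, ⟨(γ u).appr k, PadicInt.appr_lt _ _⟩),
     fun i u => (d i u, ⟨(δ i u).appr k, PadicInt.appr_lt _ _⟩))
  let Sat : CT → (ℕ → ZMod p) → Prop := fun χ g =>
    ∃ c γ d δ, (¬ ((X : PowerSeries (ZMod p)) ^ (N+1) ∣ valF T c γ) ∧
      valF T c γ * ((X : PowerSeries (ZMod p)) ^ (CC B) * PowerSeries.mk g) =
        ∑ i, valF T (d i) (δ i) * G B i) ∧ classOf c γ d δ = χ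
  let Φ : CT → (ℕ → ZMod p) := fun χ =>
    if h : ∃ g, Sat χ g then h.choose else 0
  have hΦ : ∀ χ, (∃ g, Sat χ g) → Sat χ (Φ χ) := by
    intro χ h
    simp only [Φ, dif_pos h]
    exact h.choose_spec
  let W : CT → (Fin (P - dd) → ZMod p) := fun χ j => Φ χ (dd + j)
  have hcardlt : Fintype.card CT < Fintype.card (Fin (P - dd) → ZMod p) := by
    have hcard : Fintype.card CT = p ^ ((k+1) * (M * (B+1))) := by
      simp only [CT, Fintype.card_prod, Fintype.card_fun, ZMod.card, Fintype.card_fin]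
      rw [← pow_succ', ← pow_mul]
      ring_nf
    rw [hcard]
    simp only [Fintype.card_fun, ZMod.card, Fintype.card_fin]
    exact Nat.pow_lt_pow_right (by omega) hwin
  have hex : ∃ w : Fin (P - dd) → ZMod p, w ∉ Set.range W := by
    by_contra hcon
    push_neg at hcon
    have hsurj : Function.Surjective W := fun w => hcon w
    exact absurd (Fintype.card_le_of_surjective W hsurj) (by omega)
  obtain ⟨w, hw⟩ := hex
  refine ⟨P, fun n => if n < dd then q n else if h : n < P then w ⟨n - dd, by omega⟩ else 0,
    hdP, fun n hn => by simp [hn], ?_⟩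
  intro f hf hcon
  obtain ⟨c, γ, d, δ, hq, heq⟩ := hcon
  have hsat : ∃ g, Sat (classOf c γ d δ) g := ⟨f, c, γ, d, δ, ⟨hq, heq⟩, rfl⟩
  obtain ⟨c', γ', d', δ', ⟨hq', heq'⟩, hcls⟩ := hΦ _ hsat
  -- extract equalities from the class equation
  have hc : ∀ u, c' u = c u := by
    intro u
    have := congrFun (congrArg Prod.fst hcls) u
    exact (congrArg Prod.fst this)
  have hγa : ∀ u, (γ' u).appr k = (γ u).appr k := by
    intro u
    have := congrFun (congrArg Prod.fst hcls) u
    have := congrArg Prod.snd this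
    exact congrArg Fin.val this
  have hd : ∀ i u, d' i u = d i u := by
    intro i u
    have := congrFun (congrFun (congrArg Prod.snd hcls) i) u
    exact congrArg Prod.fst this
  have hδa : ∀ i u, (δ' i u).appr k = (δ i u).appr k := by
    intro i u
    have := congrFun (congrFun (congrArg Prod.snd hcls) i) u
    have := congrArg Prod.snd this
    exact congrArg Fin.val this
  have hcfun : c' = c := funext hc
  have hdfun : d' = d := funext fun i => funext (hd i)
  rw [hcfun] at heq' hq'
  rw [hdfun] at heq'
  -- apply the agreement lemma
  have hagree := agree T CC G hT (f₁ := PowerSeries.mk f) (f₂ := PowerSeries.mk (Φ (classOf c γ d δ)))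
    (fun u => (hγa u).symm) (fun i u => (hδa i u).symm) hq heq heq'
  have hcoeff : ∀ n, n < P → f n = Φ (classOf c γ d δ) n := by
    intro n hn
    have h0 := PowerSeries.X_pow_dvd_iff.mp hagree n hn
    rw [map_sub] at h0
    have : (PowerSeries.coeff n) (PowerSeries.mk f) =
        (PowerSeries.coeff n) (PowerSeries.mk (Φ (classOf c γ d δ))) :=
      sub_eq_zero.mp h0
    simpa using this
  apply hw
  refine ⟨classOf c γ d δ, ?_⟩
  funext j
  have hj : (dd + (j : ℕ)) < P := by omega
  have h1 : f (dd + (j : ℕ)) = w j := by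
    rw [hf _ hj]
    simp only [Nat.add_sub_cancel_left]
    rw [if_neg (by omega), dif_pos hj]
  show Φ (classOf c γ d δ) (dd + (j : ℕ)) = w j
  rw [← hcoeff _ hj, h1]

include hT in
lemma diagonal : ∃ f : ℕ → ZMod p, ∀ B M N, ¬ Con T CC G B M N (PowerSeries.mk f) := by
  classical
  let dec : ℕ → ℕ × ℕ × ℕ := fun s =>
    (s.unpair.1, (s.unpair.2).unpair.1, (s.unpair.2).unpair.2)
  let F : ℕ → ℕ × (ℕ → ZMod p) := fun s => Nat.rec ((0 : ℕ), fun _ => (0 : ZMod p))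
    (fun s ih =>
      ((step T CC G hT (dec s).1 (dec s).2.1 (dec s).2.2 ih.1 ih.2).choose,
       (step T CC G hT (dec s).1 (dec s).2.1 (dec s).2.2 ih.1 ih.2).choose_spec.choose)) s
  have hF1 : ∀ s, (F s).1 < (F (s+1)).1 ∧
      (∀ n, n < (F s).1 → (F (s+1)).2 n = (F s).2 n) ∧
      (∀ f : ℕ → ZMod p, (∀ n, n < (F (s+1)).1 → f n = (F (s+1)).2 n) →
        ¬ Con T CC G (dec s).1 (dec s).2.1 (dec s).2.2 (PowerSeries.mk f)) := by
    intro s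
    exact (step T CC G hT (dec s).1 (dec s).2.1 (dec s).2.2
      (F s).1 (F s).2).choose_spec.choose_spec
  have hge : ∀ s, s ≤ (F s).1 := by
    intro s
    induction s with
    | zero => exact Nat.zero_le _
    | succ s ih => exact Nat.succ_le_of_lt (lt_of_le_of_lt ih (hF1 s).1)
  have hmono : ∀ s t, s ≤ t → (F s).1 ≤ (F t).1 := by
    intro s t hst
    induction t with
    | zero => rw [Nat.le_zero.mp hst]
    | succ t ih =>
      rcases Nat.lt_or_ge s (t+1) with h | h
      · exact le_trans (ih (Nat.lt_succ_iff.mp h)) (hF1 t).1.le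
      · rw [le_antisymm hst h]
  have hstab : ∀ s t n, s ≤ t → n < (F s).1 → (F t).2 n = (F s).2 n := by
    intro s t
    induction t with
    | zero =>
      intro n hst hn
      rw [Nat.le_zero.mp hst]
    | succ t ih =>
      intro n hst hn
      rcases Nat.lt_or_ge s (t+1) with h | h
      · have hst' : s ≤ t := Nat.lt_succ_iff.mp h
        rw [(hF1 t).2.1 n (lt_of_lt_of_le hn (hmono s t hst'))]
        exact ih n hst' hn
      · rw [le_antisymm hst h]
  have hclaim : ∀ s n, n < (F s).1 → (F (n+1)).2 n = (F s).2 n := by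
    intro s n hn
    have hn1 : n < (F (n+1)).1 := lt_of_lt_of_le (Nat.lt_succ_self n) (hge (n+1))
    have h1 := hstab s (max s (n+1)) n (le_max_left _ _) hn
    have h2 := hstab (n+1) (max s (n+1)) n (le_max_right _ _) hn1
    rw [← h2, h1]
  refine ⟨fun n => (F (n+1)).2 n, fun B M N hcon => ?_⟩
  set s := Nat.pair B (Nat.pair M N) with hs
  have hdec : dec s = (B, M, N) := by
    simp [dec, hs, Nat.unpair_pair]
  have := (hF1 s).2.2 (fun n => (F (n+1)).2 n) (fun n hn => hclaim (s+1) n hn)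
  rw [hdec] at this
  exact this hcon

end Core

section Lists

variable (T : ℤ_[p] → PowerSeries (ZMod p))
variable (hT1 : T 0 = 1) (hTm : ∀ a b, T (a+b) = T a * T b)

noncomputable def lval (l : List (ZMod p × ℤ_[p])) : PowerSeries (ZMod p) :=
  (l.map fun q => PowerSeries.C q.1 * T q.2).sum

@[simp] lemma lval_nil : lval T [] = 0 := rfl

@[simp] lemma lval_cons (q : ZMod p × ℤ_[p]) (l : List (ZMod p × ℤ_[p])) :
    lval T (q :: l) = PowerSeries.C q.1 * T q.2 + lval T l := by
  simp [lval]

lemma lval_append (l₁ l₂ : List (ZMod p × ℤ_[p])) :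
    lval T (l₁ ++ l₂) = lval T l₁ + lval T l₂ := by
  simp [lval]

include hT1 in
lemma lval_one : lval T [((1 : ZMod p), (0 : ℤ_[p]))] = 1 := by
  simp [lval, hT1]

lemma lval_neg (l : List (ZMod p × ℤ_[p])) :
    lval T (l.map fun q => (-q.1, q.2)) = - lval T l := by
  induction l with
  | nil => simp
  | cons q l ih => simp [ih]; ring

noncomputable def lmul (l₁ l₂ : List (ZMod p × ℤ_[p])) : List (ZMod p × ℤ_[p]) :=
  l₁.flatMap fun q => l₂.map fun r => (q.1 * r.1, q.2 + r.2)

include hTm in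
lemma lval_smul (q : ZMod p × ℤ_[p]) (l : List (ZMod p × ℤ_[p])) :
    lval T (l.map fun r => (q.1 * r.1, q.2 + r.2)) =
      (PowerSeries.C q.1 * T q.2) * lval T l := by
  induction l with
  | nil => simp
  | cons r l ih =>
    simp only [List.map_cons, lval_cons, ih]
    rw [map_mul, hTm]
    ring

include hTm in
lemma lval_mul (l₁ l₂ : List (ZMod p × ℤ_[p])) :
    lval T (lmul l₁ l₂) = lval T l₁ * lval T l₂ := by
  induction l₁ with
  | nil => simp [lmul]
  | cons q l ih =>
    rw [lmul, List.flatMap_cons, lval_append, ← lmul, ih, lval_smul T hTm, lval_cons]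
    ring

include hT1 hTm in
lemma lval_prod (t : Finset ℕ) (F : ℕ → List (ZMod p × ℤ_[p])) :
    ∃ l, lval T l = ∏ i ∈ t, lval T (F i) := by
  classical
  induction t using Finset.induction_on with
  | empty => exact ⟨[((1 : ZMod p), (0 : ℤ_[p]))], by rw [lval_one T hT1]; simp⟩
  | @insert a t hnotmem ih =>
    obtain ⟨l, hl⟩ := ih
    refine ⟨lmul (F a) l, ?_⟩
    rw [lval_mul T hTm, hl, Finset.prod_insert hnotmem]

lemma lval_eq_sum_fin (l : List (ZMod p × ℤ_[p])) :
    lval T l = ∑ i : Fin l.length,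
      PowerSeries.C (l.get i).1 * T (l.get i).2 := by
  conv_lhs => rw [← List.ofFn_get l]
  rw [lval, List.map_ofFn, List.sum_ofFn]
  simp [Function.comp]

lemma lval_replicate (m : ℕ) :
    lval T (List.replicate m ((0 : ZMod p), (0 : ℤ_[p]))) = 0 := by
  induction m with
  | zero => simp
  | succ m ih => rw [List.replicate_succ, lval_cons, ih]; simp

lemma list_to_fun (l : List (ZMod p × ℤ_[p])) (M : ℕ) (h : l.length ≤ M) :
    ∃ (c : Fin M → ZMod p) (γ : Fin M → ℤ_[p]), valF T c γ = lval T l := by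
  classical
  set l' : List (ZMod p × ℤ_[p]) := l ++ List.replicate (M - l.length) ((0:ZMod p), (0:ℤ_[p]))
    with hl'
  have hlen : l'.length = M := by
    simp [hl', List.length_append, List.length_replicate]
    omega
  refine ⟨fun u => (l'.get (Fin.cast hlen.symm u)).1,
          fun u => (l'.get (Fin.cast hlen.symm u)).2, ?_⟩
  have hval : lval T l' = lval T l := by
    rw [hl', lval_append, lval_replicate, add_zero]
  rw [valF, ← hval, lval_eq_sum_fin]
  exact Equiv.sum_comp (finCongr hlen.symm)
    (fun i => PowerSeries.C (l'.get i).1 * T (l'.get i).2)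

end Lists


section Bridge

variable (T : ℤ_[p] → PowerSeries (ZMod p))
variable (hT1 : T 0 = 1) (hTm : ∀ a b, T (a+b) = T a * T b)

local notation "φ" => HahnSeries.ofPowerSeries ℤ (ZMod p)

include hT1 hTm in
lemma subring_rep {z : LaurentSeries (ZMod p)}
    (hz : z ∈ Subring.closure (Set.range fun α : ℤ_[p] => φ (T α))) :
    ∃ l, z = φ (lval T l) := by
  induction hz using Subring.closure_induction with
  | mem x hx =>
    obtain ⟨α, rfl⟩ := hx
    exact ⟨[((1 : ZMod p), α)], by simp⟩
  | zero => exact ⟨[], by simp⟩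
  | one => exact ⟨[((1 : ZMod p), (0 : ℤ_[p]))], by rw [lval_one T hT1]; simp⟩
  | add x y hx hy ihx ihy =>
    obtain ⟨lx, rfl⟩ := ihx
    obtain ⟨ly, rfl⟩ := ihy
    exact ⟨lx ++ ly, by rw [lval_append, map_add]⟩
  | neg x hx ihx =>
    obtain ⟨lx, rfl⟩ := ihx
    exact ⟨lx.map fun q => (-q.1, q.2), by rw [lval_neg, map_neg]⟩
  | mul x y hx hy ihx ihy =>
    obtain ⟨lx, rfl⟩ := ihx
    obtain ⟨ly, rfl⟩ := ihy
    exact ⟨lmul lx ly, by rw [lval_mul T hTm, map_mul]⟩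

include hT1 hTm in
lemma subfield_rep {z : LaurentSeries (ZMod p)}
    (hz : z ∈ Subfield.closure (Set.range fun α : ℤ_[p] => φ (T α))) :
    ∃ la lb, z = φ (lval T la) / φ (lval T lb) ∧ φ (lval T lb) ≠ 0 := by
  obtain ⟨y, hy, w, hw, hdiv⟩ := Subfield.mem_closure_iff.mp hz
  by_cases hw0 : w = 0
  · refine ⟨[], [((1 : ZMod p), (0 : ℤ_[p]))], ?_, ?_⟩
    · rw [← hdiv, hw0, lval_one T hT1]
      simp
    · rw [lval_one T hT1]
      simp
  · obtain ⟨la, rfl⟩ := subring_rep T hT1 hTm hy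
    obtain ⟨lb, rfl⟩ := subring_rep T hT1 hTm hw
    exact ⟨la, lb, hdiv.symm, hw0⟩

end Bridge

section Main

variable (T : ℤ_[p] → PowerSeries (ZMod p))
variable (hT1 : T 0 = 1) (hTm : ∀ a b, T (a+b) = T a * T b)

local notation "φ" => HahnSeries.ofPowerSeries ℤ (ZMod p)

lemma phi_X_pow (m : ℕ) :
    φ ((X : PowerSeries (ZMod p)) ^ m) = HahnSeries.single (m : ℤ) 1 := by
  rw [map_pow, HahnSeries.ofPowerSeries_X, HahnSeries.single_pow]
  simp

variable (od : ℕ → ℤ) (h : ℕ → PowerSeries (ZMod p))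

noncomputable def CCdef : ℕ → ℕ := fun B =>
  Finset.sup (Finset.range B) fun i => (-(od i)).toNat

noncomputable def Gdef : (B : ℕ) → Fin B → PowerSeries (ZMod p) := fun B i =>
  (X : PowerSeries (ZMod p)) ^ (((CCdef od B : ℤ) + od (i : ℕ)).toNat) * h (i : ℕ)

lemma CC_nonneg {B i : ℕ} (hi : i < B) : 0 ≤ (CCdef od B : ℤ) + od i := by
  have h1 : (-(od i)).toNat ≤ CCdef od B := by
    unfold CCdef
    exact Finset.le_sup (f := fun i => (-(od i)).toNat) (Finset.mem_range.mpr hi)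
  have h2 : -(od i) ≤ ((-(od i)).toNat : ℤ) := Int.self_le_toNat _
  omega

include hT1 hTm in
lemma span_to_con (e : ℕ → LaurentSeries (ZMod p))
    (hdecomp : ∀ i, e i = HahnSeries.single (od i) 1 * φ (h i))
    (f : ℕ → ZMod p)
    (hmem : φ (PowerSeries.mk f) ∈ Submodule.span
      (Subfield.closure (Set.range fun α : ℤ_[p] => φ (T α)))
      (Set.range e)) :
    ∃ B M N, Con T (CCdef od) (Gdef od h) B M N (PowerSeries.mk f) := by
  classical
  set K := Subfield.closure (Set.range fun α : ℤ_[p] => φ (T α)) with hK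
  obtain ⟨n, cf, g, hsum⟩ := Submodule.mem_span_set'.mp hmem
  have hsum' : ∑ j : Fin n, ((cf j : LaurentSeries (ZMod p))) * ((g j : LaurentSeries (ZMod p)))
      = φ (PowerSeries.mk f) := hsum
  choose idx hidx using fun j : Fin n => Set.mem_range.mp (g j).2
  set B := (Finset.univ.sup idx) + 1 with hB
  have hidxB : ∀ j, idx j < B := fun j =>
    Nat.lt_succ_of_le (Finset.le_sup (Finset.mem_univ j))
  set kk : ℕ → K := fun i => ∑ j ∈ Finset.univ.filter (fun j => idx j = i), cf j with hkk
  have hsum2 : ∑ i ∈ Finset.range B, ((kk i : LaurentSeries (ZMod p))) * e i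
      = φ (PowerSeries.mk f) := by
    have hfib := Finset.sum_fiberwise_of_maps_to
      (fun j (_ : j ∈ Finset.univ) => Finset.mem_range.mpr (hidxB j))
      (fun j => ((cf j : LaurentSeries (ZMod p))) * ((g j : LaurentSeries (ZMod p))))
    rw [← hsum', ← hfib]
    refine Finset.sum_congr rfl fun i _ => ?_
    have hcoe : ((kk i : LaurentSeries (ZMod p)))
        = ∑ j ∈ Finset.univ.filter (fun j => idx j = i), (cf j : LaurentSeries (ZMod p)) := by
      exact_mod_cast rfl
    rw [hcoe, Finset.sum_mul]
    refine Finset.sum_congr rfl fun j hj => ?_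
    have hji : idx j = i := (Finset.mem_filter.mp hj).2
    rw [← hidx j, hji]
  choose la lb hk hbne using fun i : ℕ => subfield_rep T hT1 hTm (SetLike.coe_mem (kk i))
  obtain ⟨bb, hbb⟩ := lval_prod T hT1 hTm (Finset.range B) lb
  have hbbφ : φ (lval T bb) = ∏ i ∈ Finset.range B, φ (lval T (lb i)) := by
    rw [hbb, map_prod]
  have hbbne : φ (lval T bb) ≠ 0 := by
    rw [hbbφ]
    exact Finset.prod_ne_zero_iff.mpr fun i _ => hbne i
  have hexc : ∀ i : ℕ, ∃ l, lval T l =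
      ∏ i' ∈ (Finset.range B).erase i, lval T (lb i') :=
    fun i => lval_prod T hT1 hTm _ lb
  choose exc hexcv using hexc
  set ab : ℕ → List (ZMod p × ℤ_[p]) := fun i => lmul (la i) (exc i) with hab
  have habv : ∀ i, φ (lval T (ab i)) = φ (lval T (la i)) *
      ∏ i' ∈ (Finset.range B).erase i, φ (lval T (lb i')) := by
    intro i
    rw [hab]
    simp only []
    rw [lval_mul T hTm, map_mul, hexcv, map_prod]
  -- main equation in LaurentSeries
  have hmainL : φ (lval T bb) * φ (PowerSeries.mk f)
      = ∑ i ∈ Finset.range B, φ (lval T (ab i)) * e i := by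
    rw [← hsum2, Finset.mul_sum]
    refine Finset.sum_congr rfl fun i hi => ?_
    rw [hk i, habv i, hbbφ,
      ← Finset.mul_prod_erase (Finset.range B) (fun i' => φ (lval T (lb i'))) hi]
    have hne := hbne i
    field_simp
  -- multiply by single (CC B) 1 and pull back to power series
  have hCCeq : ∀ i : Fin B,
      HahnSeries.single ((CCdef od B : ℕ) : ℤ) (1 : ZMod p) * HahnSeries.single (od (i:ℕ)) 1
        = φ ((X : PowerSeries (ZMod p)) ^ (((CCdef od B : ℤ) + od (i:ℕ)).toNat)) := by
    intro i
    rw [HahnSeries.single_mul_single, one_mul, phi_X_pow,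
      Int.toNat_of_nonneg (CC_nonneg od i.2)]
  have hmainL2 : φ (lval T bb * ((X : PowerSeries (ZMod p)) ^ (CCdef od B) * PowerSeries.mk f))
      = φ (∑ i : Fin B, lval T (ab (i : ℕ)) * Gdef od h B i) := by
    rw [map_mul, map_mul, phi_X_pow]
    calc φ (lval T bb) * (HahnSeries.single ((CCdef od B : ℕ) : ℤ) 1 * φ (PowerSeries.mk f))
        = HahnSeries.single ((CCdef od B : ℕ) : ℤ) 1 * (φ (lval T bb) * φ (PowerSeries.mk f)) := by
          ring
      _ = HahnSeries.single ((CCdef od B : ℕ) : ℤ) 1 *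
          ∑ i ∈ Finset.range B, φ (lval T (ab i)) * e i := by rw [hmainL]
      _ = ∑ i : Fin B, HahnSeries.single ((CCdef od B : ℕ) : ℤ) 1 *
          (φ (lval T (ab (i:ℕ))) * e (i:ℕ)) := by
          rw [Finset.mul_sum, ← Fin.sum_univ_eq_sum_range
            (fun i => HahnSeries.single ((CCdef od B : ℕ) : ℤ) 1 * (φ (lval T (ab i)) * e i)) B]
      _ = φ (∑ i : Fin B, lval T (ab (i : ℕ)) * Gdef od h B i) := by
          rw [map_sum]
          refine Finset.sum_congr rfl fun i _ => ?_
          rw [hdecomp (i : ℕ), Gdef]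
          rw [map_mul, map_mul, ← hCCeq i]
          ring
  have hmainR : lval T bb * ((X : PowerSeries (ZMod p)) ^ (CCdef od B) * PowerSeries.mk f)
      = ∑ i : Fin B, lval T (ab (i : ℕ)) * Gdef od h B i :=
    HahnSeries.ofPowerSeries_injective hmainL2
  -- choose N
  have hbb0 : lval T bb ≠ 0 := by
    intro h0
    exact hbbne (by rw [h0, map_zero])
  obtain ⟨N, hN⟩ : ∃ N, PowerSeries.coeff N (lval T bb) ≠ 0 := by
    by_contra hc
    push_neg at hc
    exact hbb0 (PowerSeries.ext fun m => by simpa using hc m)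
  -- choose M
  set M := max bb.length ((Finset.range B).sup fun i => (ab i).length) with hM
  obtain ⟨c, γ, hcγ⟩ := list_to_fun T bb M (le_max_left _ _)
  have hablen : ∀ i : Fin B, (ab (i : ℕ)).length ≤ M :=
    fun i => le_trans (Finset.le_sup (f := fun i => (ab i).length) (Finset.mem_range.mpr i.2))
      (le_max_right bb.length _)
  choose dd δδ hdd using fun i : Fin B => list_to_fun T (ab (i : ℕ)) M (hablen i)
  refine ⟨B, M, N, c, γ, dd, δδ, ?_, ?_⟩
  · intro hdvd
    rw [hcγ] at hdvd
    exact hN (PowerSeries.X_pow_dvd_iff.mp hdvd N (Nat.lt_succ_self N))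
  · rw [hcγ]
    rw [hmainR]
    refine Finset.sum_congr rfl fun i _ => ?_
    rw [hdd i]

end Main

end Stmt3


/-- Let `K` be the subfield of the field of Laurent series `(ℤ/p)((x))` generated by
`{(1-x)^α : α ∈ ℤ_p}` (where `α ↦ (1-x)^α` is the continuous extension of `n ↦ (1-x)^n`,
characterized by `(1-x)^α ≡ (1-x)^(α mod pⁱ) mod (x^(pⁱ))`).  Then the degree
`[(ℤ/p)((x)) : K]` is uncountable, i.e. `(ℤ/p)((x))` is not a countable-dimensional
`K`-vector space. -/
theorem stmt3 (p : ℕ) [Fact p.Prime]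
    (τ : Multiplicative ℤ_[p] →* PowerSeries (ZMod p))
    (hτ1 : τ (Multiplicative.ofAdd (1 : ℤ_[p])) = 1 - PowerSeries.X)
    (hτ2 : ∀ (α : ℤ_[p]) (i : ℕ),
      τ (Multiplicative.ofAdd α) - (1 - PowerSeries.X) ^ (α.appr i) ∈
        Ideal.span {(PowerSeries.X : PowerSeries (ZMod p)) ^ p ^ i}) :
    Cardinal.aleph0 < Module.rank
      (Subfield.closure (Set.range fun α : ℤ_[p] =>
        (HahnSeries.ofPowerSeries ℤ (ZMod p)) (τ (Multiplicative.ofAdd α))))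
      (LaurentSeries (ZMod p)) := by
  classical
  by_contra hlt
  rw [not_lt] at hlt
  set K := Subfield.closure (Set.range fun α : ℤ_[p] =>
    (HahnSeries.ofPowerSeries ℤ (ZMod p)) (τ (Multiplicative.ofAdd α))) with hK
  set L := LaurentSeries (ZMod p) with hL
  let b := Module.Basis.ofVectorSpace K L
  have hrank : Cardinal.mk (Module.Basis.ofVectorSpaceIndex K L) = Module.rank K L :=
    b.mk_eq_rank''
  have hcnt : Countable (Module.Basis.ofVectorSpaceIndex K L) := by
    rw [← Cardinal.mk_le_aleph0_iff, hrank]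
    exact hlt
  have hne : Nonempty (Module.Basis.ofVectorSpaceIndex K L) := by
    by_contra hemp
    have h0 : (Set.range (fun i : Module.Basis.ofVectorSpaceIndex K L => (i : L))) = ∅ := by
      simp only [Set.range_eq_empty_iff]
      exact not_nonempty_iff.mp hemp
    have hspan := b.span_eq
    rw [Module.Basis.range_ofVectorSpace] at hspan
    have : Subtype.val '' (Set.univ : Set (Module.Basis.ofVectorSpaceIndex K L)) = Module.Basis.ofVectorSpaceIndex K L := by
      simp
    have h1 : (Module.Basis.ofVectorSpaceIndex K L : Set L) = ∅ := by
      rw [← Subtype.range_coe (s := Module.Basis.ofVectorSpaceIndex K L)]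
      exact h0
    rw [h1] at hspan
    have h2 : (1 : L) ∈ Submodule.span K (∅ : Set L) := hspan ▸ Submodule.mem_top
    rw [Submodule.span_empty, Submodule.mem_bot] at h2
    exact one_ne_zero h2
  obtain ⟨sfn, hsfn⟩ := exists_surjective_nat (Module.Basis.ofVectorSpaceIndex K L)
  set e : ℕ → L := fun n => ((sfn n : Module.Basis.ofVectorSpaceIndex K L) : L) with he
  have hspan : Submodule.span K (Set.range e) = ⊤ := by
    have hre : Set.range e = Module.Basis.ofVectorSpaceIndex K L := by
      rw [he]
      have : Set.range (fun n => ((sfn n : Module.Basis.ofVectorSpaceIndex K L) : L))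
          = Subtype.val '' Set.range sfn := by
        rw [← Set.range_comp]
        rfl
      rw [this, Set.range_eq_univ.mpr hsfn, Set.image_univ, Subtype.range_coe]
    rw [hre]
    have := b.span_eq
    rw [Module.Basis.range_ofVectorSpace] at this
    exact this
  -- decompose each e i
  have hdec : ∀ i : ℕ, ∃ (o : ℤ) (g : PowerSeries (ZMod p)),
      e i = HahnSeries.single o 1 * (HahnSeries.ofPowerSeries ℤ (ZMod p)) g := by
    intro i
    by_cases h0 : e i = 0
    · exact ⟨0, 0, by rw [h0, map_zero, mul_zero]⟩
    · exact ⟨(e i).order, (e i).powerSeriesPart,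
        (LaurentSeries.single_order_mul_powerSeriesPart (e i)).symm⟩
  choose od gg hdecomp using hdec
  set T : ℤ_[p] → PowerSeries (ZMod p) := fun γ => τ (Multiplicative.ofAdd γ) with hT
  have hT1 : T 0 = 1 := by
    rw [hT]
    simp only [ofAdd_zero, map_one]
  have hTm : ∀ a b, T (a+b) = T a * T b := by
    intro a b
    rw [hT]
    simp only [ofAdd_add, map_mul]
  have hTd : ∀ (γ : ℤ_[p]) (k : ℕ),
      (PowerSeries.X : PowerSeries (ZMod p)) ^ (p ^ k) ∣ (T γ - (1 - PowerSeries.X) ^ (γ.appr k)) :=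
    fun γ k => Ideal.mem_span_singleton.mp (hτ2 γ k)
  obtain ⟨fd, hfd⟩ := Stmt3.diagonal T (Stmt3.CCdef od) (Stmt3.Gdef od gg) hTd
  have hmem : (HahnSeries.ofPowerSeries ℤ (ZMod p)) (PowerSeries.mk fd) ∈
      Submodule.span K (Set.range e) := by
    rw [hspan]
    exact Submodule.mem_top
  obtain ⟨B, M, N, hcon⟩ := Stmt3.span_to_con T hT1 hTm od gg e hdecomp fd hmem
  exact hfd B M N hcon
end

section
/- Let K be the subfield of (Z/p)((x)) generated by { (1-x)^α : α ∈ Z_p } and let R = K ∩ (Z/p)[[x]]. Then the multiplication map (Z/p)[[x]] ⊗_R K → (Z/p)((x)) is an isomorphism of (Z/p)[[x]]-modules. -/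
open scoped TensorProduct

set_option maxHeartbeats 1600000 in
set_option synthInstance.maxHeartbeats 400000 in
/-- Let `K ⊆ (ℤ/p)((x))` be the subfield generated by `{(1-x)^α : α ∈ ℤ_p}` and
`R = K ∩ (ℤ/p)[[x]]` (realized as the preimage of `K` under the inclusion
`(ℤ/p)[[x]] ↪ (ℤ/p)((x))`).  Then the multiplication map `(ℤ/p)[[x]] ⊗_R K → (ℤ/p)((x))`,
`a ⊗ b ↦ ab`, is an isomorphism (formalized: it is bijective; it is in particular
`(ℤ/p)[[x]]`-linear). -/
theorem stmt4 (p : ℕ) [Fact p.Prime]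
    (τ : Multiplicative ℤ_[p] →* PowerSeries (ZMod p))
    (hτ1 : τ (Multiplicative.ofAdd (1 : ℤ_[p])) = 1 - PowerSeries.X)
    (hτ2 : ∀ (α : ℤ_[p]) (i : ℕ),
      τ (Multiplicative.ofAdd α) - (1 - PowerSeries.X) ^ (α.appr i) ∈
        Ideal.span {(PowerSeries.X : PowerSeries (ZMod p)) ^ p ^ i}) :
    ∀ (K : Subfield (LaurentSeries (ZMod p))),
      K = Subfield.closure (Set.range fun α : ℤ_[p] =>
        (HahnSeries.ofPowerSeries ℤ (ZMod p)) (τ (Multiplicative.ofAdd α))) →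
      letI R : Subring (PowerSeries (ZMod p)) :=
        K.toSubring.comap (HahnSeries.ofPowerSeries ℤ (ZMod p))
      letI : Algebra R (PowerSeries (ZMod p)) := R.subtype.toAlgebra
      letI : Algebra R (LaurentSeries (ZMod p)) :=
        ((HahnSeries.ofPowerSeries ℤ (ZMod p)).comp R.subtype).toAlgebra
      letI : Algebra R K.toSubring :=
        (((HahnSeries.ofPowerSeries ℤ (ZMod p)).comp R.subtype).codRestrict K.toSubring
          (fun x => x.2)).toAlgebra
      Function.Bijective
        (Algebra.TensorProduct.productMap
          ({ toRingHom := HahnSeries.ofPowerSeries ℤ (ZMod p), commutes' := fun r => rfl } :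
            PowerSeries (ZMod p) →ₐ[R] LaurentSeries (ZMod p))
          ({ toRingHom := K.toSubring.subtype, commutes' := fun r => rfl } :
            K.toSubring →ₐ[R] LaurentSeries (ZMod p))) := by
  intro K hK
  set ι := HahnSeries.ofPowerSeries ℤ (ZMod p) with hι
  set R : Subring (PowerSeries (ZMod p)) := K.toSubring.comap ι with hR
  letI : Algebra R (PowerSeries (ZMod p)) := R.subtype.toAlgebra
  letI : Algebra R (LaurentSeries (ZMod p)) := (ι.comp R.subtype).toAlgebra
  letI : Algebra R K.toSubring :=
    ((ι.comp R.subtype).codRestrict K.toSubring (fun x => x.2)).toAlgebra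
  have hιinj : Function.Injective ι := HahnSeries.ofPowerSeries_injective
  have hx : ι PowerSeries.X ∈ K := by
    have h1 : ι (τ (Multiplicative.ofAdd (1 : ℤ_[p]))) ∈ K := by
      rw [hK]; exact Subfield.subset_closure ⟨1, rfl⟩
    rw [hτ1, map_sub, map_one] at h1
    simpa using K.sub_mem K.one_mem h1
  set xL : LaurentSeries (ZMod p) := ι PowerSeries.X with hxL
  have hxL0 : xL ≠ 0 := fun h => PowerSeries.X_ne_zero (hιinj (by rw [← hxL, h, map_zero]))
  set xinv : K.toSubring := ⟨xL⁻¹, K.inv_mem hx⟩ with hxinv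
  set xR : R := ⟨PowerSeries.X, hx⟩ with hxR
  have hcoe_pow : ∀ n : ℕ, ((xinv ^ n : K.toSubring) : LaurentSeries (ZMod p)) = xL⁻¹ ^ n := by
    intro n; rw [SubmonoidClass.coe_pow]
  have hsmulK : ∀ (r : R) (y : K.toSubring),
      (((r • y : K.toSubring)) : LaurentSeries (ZMod p)) = ι (r : PowerSeries (ZMod p)) * y := by
    intro r y
    rw [Algebra.smul_def]
    rfl
  have hsmulP : ∀ (r : R) (a : PowerSeries (ZMod p)),
      r • a = (r : PowerSeries (ZMod p)) * a := by
    intro r a; rw [Algebra.smul_def]; rfl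
  have hmono : ∀ (a : PowerSeries (ZMod p)) (n m : ℕ),
      (a ⊗ₜ[R] (xinv ^ n) : PowerSeries (ZMod p) ⊗[R] K.toSubring)
        = (PowerSeries.X ^ m * a) ⊗ₜ[R] (xinv ^ (n + m)) := by
    intro a n m
    have h1 : xinv ^ n = (xR ^ m) • (xinv ^ (n + m)) := by
      apply Subtype.ext
      rw [hsmulK, hcoe_pow, hcoe_pow]
      have : (((xR ^ m : R)) : PowerSeries (ZMod p)) = PowerSeries.X ^ m := by
        rw [SubmonoidClass.coe_pow]
      rw [this, map_pow]
      rw [← hxL]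
      rw [pow_add, mul_left_comm, ← mul_pow, mul_inv_cancel₀ hxL0, one_pow, mul_one]
    rw [h1, TensorProduct.tmul_smul, TensorProduct.smul_tmul', hsmulP,
      show ((xR ^ m : R) : PowerSeries (ZMod p)) = PowerSeries.X ^ m from
        SubmonoidClass.coe_pow xR m]
  have key : ∀ t : PowerSeries (ZMod p) ⊗[R] K.toSubring,
      ∃ (a : PowerSeries (ZMod p)) (n : ℕ), t = a ⊗ₜ[R] (xinv ^ n) := by
    intro t
    induction t using TensorProduct.induction_on with
    | zero => exact ⟨0, 0, by simp⟩
    | tmul a k =>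
        obtain ⟨⟨g, m⟩, hg⟩ := IsLocalization.surj
          (Submonoid.powers (PowerSeries.X : PowerSeries (ZMod p)))
          (k : LaurentSeries (ZMod p))
        obtain ⟨n, hm⟩ := m.2
        simp only [LaurentSeries.coe_algebraMap] at hg
        rw [← hm] at hg
        have hgK : ι g ∈ K.toSubring := by
          rw [← hg]
          exact K.mul_mem k.2 (by rw [map_pow]; exact K.pow_mem hx n)
        have hk : k = (⟨g, hgK⟩ : R) • (xinv ^ n) := by
          apply Subtype.ext
          rw [hsmulK, hcoe_pow]
          rw [map_pow] at hg
          rw [← hg, ← hxL]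
          rw [mul_assoc, ← mul_pow, mul_inv_cancel₀ hxL0, one_pow, mul_one]
        exact ⟨g * a, n, by rw [hk, TensorProduct.tmul_smul, TensorProduct.smul_tmul', hsmulP]⟩
    | add t1 t2 h1 h2 =>
        obtain ⟨a1, n1, rfl⟩ := h1
        obtain ⟨a2, n2, rfl⟩ := h2
        refine ⟨PowerSeries.X ^ (max n1 n2 - n1) * a1 + PowerSeries.X ^ (max n1 n2 - n2) * a2,
          max n1 n2, ?_⟩
        rw [hmono a1 n1 (max n1 n2 - n1), hmono a2 n2 (max n1 n2 - n2),
          show n1 + (max n1 n2 - n1) = max n1 n2 by omega,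
          show n2 + (max n1 n2 - n2) = max n1 n2 by omega, TensorProduct.add_tmul]
  constructor
  · rw [injective_iff_map_eq_zero]
    intro t ht
    obtain ⟨a, n, rfl⟩ := key t
    rw [Algebra.TensorProduct.productMap_apply_tmul] at ht
    have ha : ι a = 0 := by
      rcases mul_eq_zero.mp ht with h | h
      · exact h
      · exfalso
        have : ((xinv ^ n : K.toSubring) : LaurentSeries (ZMod p)) ≠ 0 := by
          rw [hcoe_pow]
          exact pow_ne_zero _ (inv_ne_zero hxL0)
        exact this h
    have : a = 0 := hιinj (by rw [ha, map_zero])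
    rw [this, TensorProduct.zero_tmul]
  · intro f
    obtain ⟨⟨g, m⟩, hg⟩ := IsLocalization.surj
      (Submonoid.powers (PowerSeries.X : PowerSeries (ZMod p))) f
    obtain ⟨n, hm⟩ := m.2
    simp only [LaurentSeries.coe_algebraMap] at hg
    rw [← hm, map_pow] at hg
    refine ⟨g ⊗ₜ[R] (xinv ^ n), ?_⟩
    rw [Algebra.TensorProduct.productMap_apply_tmul]
    show ι g * ((xinv ^ n : K.toSubring) : LaurentSeries (ZMod p)) = f
    rw [hcoe_pow, ← hg, ← hxL]
    rw [mul_assoc, ← mul_pow, mul_inv_cancel₀ hxL0, one_pow, mul_one]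
end

section
/- (mod-p Hopf formula) Let G be a group and H a normal subgroup of G. Then there is a natural exact sequence H₂(G, Z/p) → H₂(G/H, Z/p) → (H ∩ [G,G]G^p)/([H,G]H^p) → 0, where [G,G]G^p denotes the subgroup generated by commutators and p-th powers of G, and [H,G]H^p the subgroup generated by commutators [h,g] (h ∈ H, g ∈ G) and p-th powers of elements of H. -/
open scoped TensorProduct
open scoped commutatorElement

/-! Second group homology with trivial coefficients in a commutative ring `k`, defined
concretely via the bar complex: `H₂(G,k) = ker d₂ / im d₃` (realized as the image of the
2-cycles in `C₂/im d₃`), where `d₂(g₁,g₂) = (g₂) - (g₁g₂) + (g₁)` and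
`d₃(g₁,g₂,g₃) = (g₂,g₃) - (g₁g₂,g₃) + (g₁,g₂g₃) - (g₁,g₂)`. -/

/-- The bar differential `d₂ : k[G²] → k[G]` for trivial coefficients. -/
noncomputable def barD2 (k G : Type) [CommRing k] [Monoid G] :
    ((G × G) →₀ k) →ₗ[k] (G →₀ k) :=
  Finsupp.lift (G →₀ k) k (G × G) fun g =>
    Finsupp.single g.2 1 - Finsupp.single (g.1 * g.2) 1 + Finsupp.single g.1 1

/-- The bar differential `d₃ : k[G³] → k[G²]` for trivial coefficients. -/
noncomputable def barD3 (k G : Type) [CommRing k] [Monoid G] :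
    ((G × G × G) →₀ k) →ₗ[k] ((G × G) →₀ k) :=
  Finsupp.lift ((G × G) →₀ k) k (G × G × G) fun g =>
    Finsupp.single (g.2.1, g.2.2) 1 - Finsupp.single (g.1 * g.2.1, g.2.2) 1
      + Finsupp.single (g.1, g.2.1 * g.2.2) 1 - Finsupp.single (g.1, g.2.1) 1

/-- The 2-cycles. -/
noncomputable def barZ2 (k G : Type) [CommRing k] [Monoid G] : Submodule k ((G × G) →₀ k) :=
  LinearMap.ker (barD2 k G)

/-- Second group homology `H₂(G,k)` with trivial coefficients: the image of the 2-cycles in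
`C₂/(im d₃)`, i.e. `ker d₂ / im d₃`. -/
noncomputable def GH2 (k G : Type) [CommRing k] [Monoid G] : Type :=
  Submodule.map (LinearMap.range (barD3 k G)).mkQ (barZ2 k G)

noncomputable instance (k G : Type) [CommRing k] [Monoid G] : AddCommGroup (GH2 k G) :=
  inferInstanceAs (AddCommGroup (Submodule.map (LinearMap.range (barD3 k G)).mkQ (barZ2 k G)))

noncomputable instance (k G : Type) [CommRing k] [Monoid G] : Module k (GH2 k G) :=
  inferInstanceAs (Module k (Submodule.map (LinearMap.range (barD3 k G)).mkQ (barZ2 k G)))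



set_option linter.unusedSectionVars false
set_option maxHeartbeats 1000000 in
section
namespace HopfAux
variable (p : ℕ) (G : Type) [Group G] (H : Subgroup G) [H.Normal]

/-- the subgroup `[G,G]Gᵖ` -/
def DD : Subgroup G :=
  ⁅(⊤ : Subgroup G), (⊤ : Subgroup G)⁆ ⊔ Subgroup.closure {x : G | ∃ g : G, x = g ^ p}

/-- the generating set of `[H,G]Hᵖ` -/
def SS : Set G :=
  {x : G | ∃ h ∈ H, ∃ g : G, x = ⁅h, g⁆} ∪ {x : G | ∃ h ∈ H, x = h ^ p}

/-- `[H,G]Hᵖ` -/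
def LL : Subgroup G := Subgroup.normalClosure (SS p G H)

instance LL_normal : (LL p G H).Normal := Subgroup.normalClosure_normal

lemma closure_conj_normal (S : Set G) (hS : ∀ x ∈ S, ∀ g : G, g * x * g⁻¹ ∈ S) :
    (Subgroup.closure S).Normal := by
  have h1 : Subgroup.closure S = Subgroup.normalClosure S := by
    refine le_antisymm ((Subgroup.closure_le _).2 Subgroup.subset_normalClosure) ?_
    refine Subgroup.closure_le _ |>.2 ?_
    intro x hx
    rcases Group.mem_conjugatesOfSet_iff.1 hx with ⟨y, hy, hconj⟩
    rcases isConj_iff.1 hconj with ⟨c, rfl⟩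
    exact Subgroup.subset_closure (hS y hy c)
  rw [h1]; infer_instance

instance DD_normal : (DD p G).Normal := by
  have h2 : (Subgroup.closure {x : G | ∃ g : G, x = g ^ p}).Normal := by
    refine closure_conj_normal G _ ?_
    rintro x ⟨g, rfl⟩ c
    exact ⟨c * g * c⁻¹, by rw [conj_pow]⟩
  have h1 : (⁅(⊤ : Subgroup G), (⊤ : Subgroup G)⁆).Normal := inferInstance
  exact Subgroup.sup_normal _ _

lemma SS_sub_H : SS p G H ⊆ H := by
  rintro x (⟨h, hh, g, rfl⟩ | ⟨h, hh, rfl⟩)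
  · have h2 : g * h⁻¹ * g⁻¹ ∈ H := Subgroup.Normal.conj_mem ‹H.Normal› _ (inv_mem hh) g
    simpa [commutatorElement_def, mul_assoc] using mul_mem hh h2
  · exact pow_mem hh p

lemma LL_le_H : LL p G H ≤ H := Subgroup.normalClosure_le_normal (SS_sub_H p G H)

lemma SS_sub_DD : SS p G H ⊆ DD p G := by
  rintro x (⟨h, hh, g, rfl⟩ | ⟨h, hh, rfl⟩)
  · exact Subgroup.mem_sup_left (Subgroup.commutator_mem_commutator (Subgroup.mem_top h) (Subgroup.mem_top g))
  · exact Subgroup.mem_sup_right (Subgroup.subset_closure ⟨h, rfl⟩)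

lemma LL_le_DD : LL p G H ≤ DD p G := Subgroup.normalClosure_le_normal (SS_sub_DD p G H)

lemma commutator_mem_LL {h : G} (hh : h ∈ H) (g : G) : ⁅h, g⁆ ∈ LL p G H :=
  Subgroup.subset_normalClosure (Or.inl ⟨h, hh, g, rfl⟩)

lemma pow_mem_LL {h : G} (hh : h ∈ H) : h ^ p ∈ LL p G H :=
  Subgroup.subset_normalClosure (Or.inr ⟨h, hh, rfl⟩)

lemma commutator_mem_DD (x y : G) : ⁅x, y⁆ ∈ DD p G :=
  Subgroup.mem_sup_left (Subgroup.commutator_mem_commutator (Subgroup.mem_top x) (Subgroup.mem_top y))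

lemma pow_mem_DD (g : G) : g ^ p ∈ DD p G :=
  Subgroup.mem_sup_right (Subgroup.subset_closure ⟨g, rfl⟩)


section Quot
variable (p : ℕ) (G : Type) [Group G] (H : Subgroup G) [H.Normal]

/-- `[H,G]Hᵖ` as a subgroup of `H`. -/
def LH : Subgroup ↥H := (LL p G H).subgroupOf H

instance LH_normal : (LH p G H).Normal := by
  unfold LH; infer_instance

instance : CommGroup (↥H ⧸ LH p G H) := by
  refine { toGroup := QuotientGroup.Quotient.group _, mul_comm := ?_ }
  intro a b
  induction a using QuotientGroup.induction_on with
  | H a =>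
  induction b using QuotientGroup.induction_on with
  | H b =>
  rw [← QuotientGroup.mk_mul, ← QuotientGroup.mk_mul, QuotientGroup.eq]
  have key : ((a : G) * (b : G))⁻¹ * ((b : G) * (a : G)) = ⁅(b : G)⁻¹, (a : G)⁻¹⁆ := by
    simp [commutatorElement_def]; group
  show (a * b)⁻¹ * (b * a) ∈ (LL p G H).subgroupOf H
  rw [Subgroup.mem_subgroupOf]
  push_cast
  rw [key]
  exact commutator_mem_LL p G H (inv_mem b.2) _

/-- `H/[H,G]Hᵖ`, additive. -/
abbrev Hbar : Type := Additive (↥H ⧸ LH p G H)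

noncomputable instance : Module (ZMod p) (Hbar p G H) := by
  refine AddCommGroup.zmodModule ?_
  intro x
  obtain ⟨a, ha⟩ := QuotientGroup.mk_surjective (Additive.toMul x)
  refine Additive.toMul.injective ?_
  rw [toMul_nsmul, ← ha, toMul_zero]
  show ((QuotientGroup.mk' (LH p G H)) a) ^ p = 1
  rw [← map_pow]
  show QuotientGroup.mk (a ^ p) = 1
  rw [QuotientGroup.eq_one_iff]
  show ((a : ↥H) ^ p : ↥H) ∈ (LL p G H).subgroupOf H
  rw [Subgroup.mem_subgroupOf]
  push_cast
  exact pow_mem_LL p G H a.2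


instance : CommGroup (G ⧸ DD p G) := by
  refine { toGroup := QuotientGroup.Quotient.group _, mul_comm := ?_ }
  intro a b
  induction a using QuotientGroup.induction_on with
  | H a =>
  induction b using QuotientGroup.induction_on with
  | H b =>
  rw [← QuotientGroup.mk_mul, ← QuotientGroup.mk_mul, QuotientGroup.eq]
  have key : (a * b)⁻¹ * (b * a) = ⁅b⁻¹, a⁻¹⁆ := by
    simp [commutatorElement_def]; group
  rw [key]
  exact commutator_mem_DD p G _ _

/-- `G/[G,G]Gᵖ`, additive. -/
abbrev Gbar : Type := Additive (G ⧸ DD p G)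

noncomputable instance : Module (ZMod p) (Gbar p G) := by
  refine AddCommGroup.zmodModule ?_
  intro x
  obtain ⟨a, ha⟩ := QuotientGroup.mk_surjective (Additive.toMul x)
  refine Additive.toMul.injective ?_
  rw [toMul_nsmul, ← ha, toMul_zero]
  show ((QuotientGroup.mk' (DD p G)) a) ^ p = 1
  rw [← map_pow]
  show QuotientGroup.mk (a ^ p) = 1
  rw [QuotientGroup.eq_one_iff]
  exact pow_mem_DD p G a

open scoped Classical in
/-- class of an element of `H` in `Hbar`; junk value `0` off `H`. -/
noncomputable def mkg (a : G) : Hbar p G H :=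
  if h : a ∈ H then Additive.ofMul (QuotientGroup.mk (⟨a, h⟩ : ↥H) : ↥H ⧸ LH p G H) else 0

open scoped Classical in
lemma mkg_of_mem {a : G} (h : a ∈ H) :
    mkg p G H a = Additive.ofMul (QuotientGroup.mk (⟨a, h⟩ : ↥H) : ↥H ⧸ LH p G H) := dif_pos h

lemma mkg_mul {a b : G} (ha : a ∈ H) (hb : b ∈ H) :
    mkg p G H (a * b) = mkg p G H a + mkg p G H b := by
  rw [mkg_of_mem p G H ha, mkg_of_mem p G H hb, mkg_of_mem p G H (mul_mem ha hb)]
  show Additive.ofMul (QuotientGroup.mk ((⟨a, ha⟩ : ↥H) * ⟨b, hb⟩))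
      = Additive.ofMul ((QuotientGroup.mk (⟨a, ha⟩ : ↥H) : ↥H ⧸ LH p G H) * QuotientGroup.mk (⟨b, hb⟩ : ↥H))
  rw [QuotientGroup.mk_mul]

lemma mkg_one : mkg p G H 1 = 0 := by
  have := mkg_mul p G H (one_mem H) (one_mem H)
  rw [mul_one] at this
  exact left_eq_add.mp this

lemma mkg_inv {a : G} (ha : a ∈ H) : mkg p G H a⁻¹ = - mkg p G H a := by
  have h1 := mkg_mul p G H (inv_mem ha) ha
  rw [inv_mul_cancel, mkg_one] at h1
  exact eq_neg_of_add_eq_zero_left h1.symm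

lemma mkg_zero_of_mem {a : G} (ha : a ∈ LL p G H) : mkg p G H a = 0 := by
  rw [mkg_of_mem p G H (LL_le_H p G H ha)]
  show Additive.ofMul (QuotientGroup.mk (⟨a, _⟩ : ↥H) : ↥H ⧸ LH p G H) = 0
  have : (QuotientGroup.mk (⟨a, LL_le_H p G H ha⟩ : ↥H) : ↥H ⧸ LH p G H) = 1 := by
    rw [QuotientGroup.eq_one_iff]
    exact Subgroup.mem_subgroupOf.mpr ha
  rw [this]
  rfl

lemma mkg_conj (g : G) {a : G} (ha : a ∈ H) : mkg p G H (g * a * g⁻¹) = mkg p G H a := by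
  have hmem : g * a * g⁻¹ * a⁻¹ ∈ LL p G H := by
    have h1 : ⁅a, g⁻¹⁆ ∈ LL p G H := commutator_mem_LL p G H ha g⁻¹
    have h2 := (LL_normal p G H).conj_mem _ h1 g
    have : g * ⁅a, g⁻¹⁆ * g⁻¹ = g * a * g⁻¹ * a⁻¹ := by
      simp [commutatorElement_def]; group
    rwa [this] at h2
  have hc : g * a * g⁻¹ ∈ H := Subgroup.Normal.conj_mem ‹H.Normal› a ha g
  have key : g * a * g⁻¹ = (g * a * g⁻¹ * a⁻¹) * a := by group
  rw [key, mkg_mul p G H (LL_le_H p G H hmem) ha, mkg_zero_of_mem p G H hmem, zero_add]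

/-- a section of `G → G/H` -/
noncomputable def sec (q : G ⧸ H) : G := Quotient.out q

lemma sec_spec (q : G ⧸ H) : (QuotientGroup.mk' H) (sec G H q) = q := QuotientGroup.out_eq' q

lemma sec_spec' (q : G ⧸ H) : (QuotientGroup.mk (sec G H q) : G ⧸ H) = q := QuotientGroup.out_eq' q

/-- `h`-part of `g`: `g = s(π g) · hgel g` -/
noncomputable def hgel (g : G) : G := (sec G H ((QuotientGroup.mk' H) g))⁻¹ * g

lemma hgel_mem (g : G) : hgel G H g ∈ H := by
  have : (QuotientGroup.mk' H) (hgel G H g) = 1 := by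
    unfold hgel; rw [map_mul, map_inv, sec_spec]; group
  exact (QuotientGroup.eq_one_iff _).mp this

/-- factor set -/
noncomputable def cel (x y : G ⧸ H) : G := sec G H x * sec G H y * (sec G H (x * y))⁻¹

lemma cel_mem (x y : G ⧸ H) : cel G H x y ∈ H := by
  have : (QuotientGroup.mk' H) (cel G H x y) = 1 := by
    unfold cel; rw [map_mul, map_mul, map_inv, sec_spec, sec_spec, sec_spec]; group
  exact (QuotientGroup.eq_one_iff _).mp this

lemma sec_mem_H : sec G H (1 : G ⧸ H) ∈ H := by
  have : (QuotientGroup.mk' H) (sec G H 1) = 1 := sec_spec G H 1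
  exact (QuotientGroup.eq_one_iff _).mp this

@[simp] lemma lift_single {k M X : Type} [CommRing k] [AddCommGroup M] [Module k M]
    (f : X → M) (x : X) (a : k) :
    Finsupp.lift M k X f (Finsupp.single x a) = a • f x := by
  rw [Finsupp.lift_apply, Finsupp.sum_single_index]
  exact zero_smul _ _

/-- `ρ : C₁(G) → Hbar` -/
noncomputable def rho : (G →₀ ZMod p) →ₗ[ZMod p] Hbar p G H :=
  Finsupp.lift (Hbar p G H) (ZMod p) G fun g => mkg p G H (hgel G H g)

/-- `σ : C₂(G/H) → Hbar` -/
noncomputable def sig : (((G ⧸ H) × (G ⧸ H)) →₀ ZMod p) →ₗ[ZMod p] Hbar p G H :=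
  Finsupp.lift (Hbar p G H) (ZMod p) ((G ⧸ H) × (G ⧸ H)) fun x => mkg p G H (cel G H x.1 x.2)

/-- The factor-set identity. -/
lemma hgel_mul (g₁ g₂ : G) :
    mkg p G H (hgel G H (g₁ * g₂)) =
      mkg p G H (cel G H ((QuotientGroup.mk' H) g₁) ((QuotientGroup.mk' H) g₂))
        + mkg p G H (hgel G H g₁) + mkg p G H (hgel G H g₂) := by
  have keyG : hgel G H (g₁ * g₂) =
      ((sec G H ((QuotientGroup.mk' H) g₁ * (QuotientGroup.mk' H) g₂))⁻¹
          * cel G H ((QuotientGroup.mk' H) g₁) ((QuotientGroup.mk' H) g₂)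
          * ((sec G H ((QuotientGroup.mk' H) g₁ * (QuotientGroup.mk' H) g₂))⁻¹)⁻¹)
        * (((sec G H ((QuotientGroup.mk' H) g₂))⁻¹ * hgel G H g₁
            * ((sec G H ((QuotientGroup.mk' H) g₂))⁻¹)⁻¹) * hgel G H g₂) := by
    unfold hgel cel
    rw [map_mul]
    group
  have m1 : _ ∈ H := Subgroup.Normal.conj_mem ‹H.Normal› _
    (cel_mem G H ((QuotientGroup.mk' H) g₁) ((QuotientGroup.mk' H) g₂))
    (sec G H ((QuotientGroup.mk' H) g₁ * (QuotientGroup.mk' H) g₂))⁻¹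
  have m2 : _ ∈ H := Subgroup.Normal.conj_mem ‹H.Normal› _
    (hgel_mem G H g₁) (sec G H ((QuotientGroup.mk' H) g₂))⁻¹
  rw [keyG, mkg_mul p G H m1 (mul_mem m2 (hgel_mem G H g₂)),
    mkg_mul p G H m2 (hgel_mem G H g₂),
    mkg_conj p G H _ (cel_mem G H ((QuotientGroup.mk' H) g₁) ((QuotientGroup.mk' H) g₂)),
    mkg_conj p G H _ (hgel_mem G H g₁)]
  abel

lemma d2_d3 (k Γ : Type) [CommRing k] [Group Γ] :
    (barD2 k Γ).comp (barD3 k Γ) = 0 := by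
  apply Finsupp.lhom_ext
  intro a b
  simp only [LinearMap.comp_apply, barD2, barD3, lift_single, map_add, map_sub, map_smul,
    LinearMap.zero_apply, smul_add, smul_sub, one_smul]
  simp only [mul_assoc]
  abel

/-- `π₂ : C₂(G) → C₂(G/H)` -/
noncomputable def pi2 : ((G × G) →₀ ZMod p) →ₗ[ZMod p] (((G ⧸ H) × (G ⧸ H)) →₀ ZMod p) :=
  Finsupp.lmapDomain (ZMod p) (ZMod p) (Prod.map (QuotientGroup.mk' H) (QuotientGroup.mk' H))

/-- `π₁ : C₁(G) → C₁(G/H)` -/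
noncomputable def pi1 : (G →₀ ZMod p) →ₗ[ZMod p] ((G ⧸ H) →₀ ZMod p) :=
  Finsupp.lmapDomain (ZMod p) (ZMod p) (QuotientGroup.mk' H)

lemma rho_d2 : (rho p G H).comp (barD2 (ZMod p) G) = -((sig p G H).comp (pi2 p G H)) := by
  apply Finsupp.lhom_ext
  intro a b
  simp only [LinearMap.comp_apply, LinearMap.neg_apply, barD2, lift_single, pi2,
    Finsupp.lmapDomain_apply, Finsupp.mapDomain_single, rho, sig, map_add, map_sub, map_smul,
    smul_add, smul_sub, one_smul, Prod.map_apply, Prod.map_fst, Prod.map_snd]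
  rw [hgel_mul p G H a.1 a.2]
  module

lemma d2_pi : (barD2 (ZMod p) (G ⧸ H)).comp (pi2 p G H) = (pi1 p G H).comp (barD2 (ZMod p) G) := by
  apply Finsupp.lhom_ext
  intro a b
  simp only [LinearMap.comp_apply, barD2, lift_single, pi2, pi1, Finsupp.lmapDomain_apply,
    Finsupp.mapDomain_single, map_add, map_sub, map_smul, Prod.map_apply, Prod.map_fst, Prod.map_snd, map_mul]

lemma sig_d3 : (sig p G H).comp (barD3 (ZMod p) (G ⧸ H)) = 0 := by
  apply Finsupp.lhom_ext
  rintro ⟨x, y, z⟩ b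
  set a1 := sec G H x
  set a2 := sec G H y
  set a3 := sec G H z
  have key : (barD3 (ZMod p) (G ⧸ H)) (Finsupp.single (x, y, z) b)
      = (pi2 p G H) ((barD3 (ZMod p) G) (Finsupp.single (a1, a2, a3) b)) := by
    simp only [barD3, lift_single, pi2, Finsupp.lmapDomain_apply, map_add, map_sub, map_smul,
      Finsupp.mapDomain_single, Prod.map_apply, map_mul]
    rw [sec_spec G H x, sec_spec G H y, sec_spec G H z]
  rw [LinearMap.comp_apply, key]
  have h2 := LinearMap.congr_fun (rho_d2 p G H) ((barD3 (ZMod p) G) (Finsupp.single (a1, a2, a3) b))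
  simp only [LinearMap.comp_apply, LinearMap.neg_apply] at h2
  have h3 : (barD2 (ZMod p) G) ((barD3 (ZMod p) G) (Finsupp.single (a1, a2, a3) b)) = 0 := by
    have := LinearMap.congr_fun (d2_d3 (ZMod p) G) (Finsupp.single (a1, a2, a3) b)
    simpa using this
  rw [h3, map_zero] at h2
  rw [LinearMap.zero_apply]
  exact neg_eq_zero.mp h2.symm

lemma psmul_zero {M : Type} [AddCommGroup M] [Module (ZMod p) M] (x : M) : p • x = 0 := by
  rw [← Nat.cast_smul_eq_nsmul (ZMod p) p x, ZMod.natCast_self, zero_smul]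

lemma single_mem_range_d2 {h : G} (hh : h ∈ DD p G) :
    Finsupp.single h (1 : ZMod p) ∈ LinearMap.range (barD2 (ZMod p) G) := by
  set R := LinearMap.range (barD2 (ZMod p) G) with hR
  have hmul : ∀ a b : G, (Submodule.Quotient.mk (Finsupp.single (a * b) (1 : ZMod p)) :
      (G →₀ ZMod p) ⧸ R) = Submodule.Quotient.mk (Finsupp.single a (1 : ZMod p))
        + Submodule.Quotient.mk (Finsupp.single b (1 : ZMod p)) := by
    intro a b
    rw [← Submodule.Quotient.mk_add, Submodule.Quotient.eq]
    refine ⟨-(Finsupp.single (a, b) (1 : ZMod p)), ?_⟩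
    simp only [map_neg, barD2, lift_single, one_smul]
    abel
  let em : G →* Multiplicative ((G →₀ ZMod p) ⧸ R) := MonoidHom.mk'
    (fun g => Multiplicative.ofAdd (Submodule.Quotient.mk (Finsupp.single g 1)))
    (fun a b => by simp only [hmul a b]; rfl)
  have hker : DD p G ≤ em.ker := by
    refine sup_le ?_ ?_
    · rw [Subgroup.commutator_le]
      intro g₁ _ g₂ _
      rw [MonoidHom.mem_ker, map_commutatorElement]
      exact commutatorElement_eq_one_iff_mul_comm.mpr (mul_comm _ _)
    · rw [Subgroup.closure_le]
      rintro x ⟨g, rfl⟩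
      rw [SetLike.mem_coe, MonoidHom.mem_ker, map_pow]
      show (Multiplicative.ofAdd (Submodule.Quotient.mk (Finsupp.single g (1:ZMod p)))) ^ p = 1
      rw [← ofAdd_nsmul, psmul_zero]
      rfl
  have : em h = 1 := hker hh
  have h2 : (Submodule.Quotient.mk (Finsupp.single h (1 : ZMod p)) :
      (G →₀ ZMod p) ⧸ R) = 0 := by
    exact congrArg Multiplicative.toAdd this
  rwa [Submodule.Quotient.mk_eq_zero] at h2

/-- `d₂(ker π₂)` -/
noncomputable def B2 : Submodule (ZMod p) (G →₀ ZMod p) :=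
  Submodule.map (barD2 (ZMod p) G) (LinearMap.ker (pi2 p G H))

lemma B2_mul (a : G) {h : G} (hh : h ∈ H) :
    Finsupp.single h (1 : ZMod p) + Finsupp.single a 1 - Finsupp.single (a * h) 1
      - Finsupp.single 1 1 ∈ B2 p G H := by
  refine ⟨Finsupp.single (a, h) (1 : ZMod p) - Finsupp.single (a, 1) 1, ?_, ?_⟩
  · simp only [SetLike.mem_coe, LinearMap.mem_ker]
    simp only [pi2, Finsupp.lmapDomain_apply, map_sub, Finsupp.mapDomain_single, Prod.map_apply]
    have : (QuotientGroup.mk' H) h = 1 := (QuotientGroup.eq_one_iff _).mpr hh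
    simp [this]
  · simp only [map_sub, barD2, lift_single, one_smul, one_mul, mul_one]
    abel

lemma B2_conj (g : G) {a : G} (ha : a ∈ H) :
    Finsupp.single a (1 : ZMod p) - Finsupp.single (g * a * g⁻¹) 1 ∈ B2 p G H := by
  refine ⟨Finsupp.single (g, a) (1 : ZMod p) - Finsupp.single (g, 1) 1
    - Finsupp.single (g * a * g⁻¹, g) 1 + Finsupp.single (1, g) 1, ?_, ?_⟩
  · simp only [SetLike.mem_coe, LinearMap.mem_ker]
    simp only [pi2, Finsupp.lmapDomain_apply, map_sub, map_add, Finsupp.mapDomain_single,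
      Prod.map_apply]
    have h1 : (QuotientGroup.mk' H) a = 1 := (QuotientGroup.eq_one_iff _).mpr ha
    have h2 : (QuotientGroup.mk' H) (g * a * g⁻¹) = 1 :=
      (QuotientGroup.eq_one_iff _).mpr (Subgroup.Normal.conj_mem ‹H.Normal› a ha g)
    simp [h1, h2]
  · simp only [map_sub, map_add, barD2, lift_single, one_smul]
    have : g * a * g⁻¹ * g = g * a := by group
    rw [this]
    simp only [mul_one, one_mul]
    abel

/-- The homomorphism `H → C₁(G)/B2`, `h ↦ [single h - single 1]`. -/
noncomputable def phi0 : ↥H →* Multiplicative ((G →₀ ZMod p) ⧸ B2 p G H) :=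
  MonoidHom.mk'
    (fun h => Multiplicative.ofAdd (Submodule.Quotient.mk
      (Finsupp.single (h : G) (1 : ZMod p) - Finsupp.single 1 1)))
    (by
      intro a b
      have key := B2_mul p G H (a : G) b.2
      show Multiplicative.ofAdd (Submodule.Quotient.mk
          (Finsupp.single ((a : G) * (b : G)) (1 : ZMod p) - Finsupp.single 1 1))
        = Multiplicative.ofAdd (Submodule.Quotient.mk
            (Finsupp.single (a : G) (1 : ZMod p) - Finsupp.single 1 1)
          + Submodule.Quotient.mk (Finsupp.single (b : G) (1 : ZMod p) - Finsupp.single 1 1))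
      congr 1
      rw [← Submodule.Quotient.mk_add, Submodule.Quotient.eq]
      have : Finsupp.single ((a : G) * (b : G)) (1 : ZMod p) - Finsupp.single 1 1
          - (Finsupp.single (a : G) (1 : ZMod p) - Finsupp.single 1 1
            + (Finsupp.single (b : G) (1 : ZMod p) - Finsupp.single 1 1))
          = -(Finsupp.single (b : G) (1 : ZMod p) + Finsupp.single (a : G) 1
            - Finsupp.single ((a : G) * (b : G)) 1 - Finsupp.single 1 1) := by abel
      rw [this]
      exact neg_mem key)

lemma phi0_conj (g : G) (a : ↥H) :
    phi0 p G H ⟨g * (a : G) * g⁻¹, Subgroup.Normal.conj_mem ‹H.Normal› _ a.2 g⟩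
      = phi0 p G H a := by
  show Multiplicative.ofAdd (Submodule.Quotient.mk _) = Multiplicative.ofAdd (Submodule.Quotient.mk _)
  congr 1
  rw [Submodule.Quotient.eq]
  have : (Finsupp.single (g * (a : G) * g⁻¹) (1 : ZMod p) - Finsupp.single 1 1)
      - (Finsupp.single (a : G) (1 : ZMod p) - Finsupp.single 1 1)
      = -(Finsupp.single (a : G) (1 : ZMod p) - Finsupp.single (g * (a : G) * g⁻¹) 1) := by abel
  rw [this]
  exact neg_mem (B2_conj p G H g a.2)

lemma phi0_LL {a : ↥H} (ha : (a : G) ∈ LL p G H) : phi0 p G H a = 1 := by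
  have hM : LL p G H ≤ Subgroup.map H.subtype (phi0 p G H).ker := by
    show Subgroup.normalClosure (SS p G H) ≤ _
    unfold Subgroup.normalClosure
    rw [Subgroup.closure_le]
    intro x hx
    rcases Group.mem_conjugatesOfSet_iff.1 hx with ⟨y, hy, hconj⟩
    rcases isConj_iff.1 hconj with ⟨c, rfl⟩
    have hyH : y ∈ H := SS_sub_H p G H hy
    have hyker : phi0 p G H ⟨y, hyH⟩ = 1 := by
      rcases hy with ⟨h, hh, g, rfl⟩ | ⟨h, hh, rfl⟩
      · -- y = ⁅h, g⁆ = h * (g * h⁻¹ * g⁻¹)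
        have hsplit : (⟨⁅h, g⁆, hyH⟩ : ↥H)
            = ⟨h, hh⟩ * ⟨g * h⁻¹ * g⁻¹, Subgroup.Normal.conj_mem ‹H.Normal› _ (inv_mem hh) g⟩ := by
          apply Subtype.ext
          show ⁅h, g⁆ = h * (g * h⁻¹ * g⁻¹)
          rw [commutatorElement_def]; group
        rw [hsplit, map_mul]
        rw [phi0_conj p G H g ⟨h⁻¹, inv_mem hh⟩]
        have h3 : (⟨h⁻¹, inv_mem hh⟩ : ↥H) = (⟨h, hh⟩ : ↥H)⁻¹ := rfl
        rw [h3, map_inv, mul_inv_cancel]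
      · -- y = h ^ p
        have h4 : (⟨h ^ p, hyH⟩ : ↥H) = (⟨h, hh⟩ : ↥H) ^ p := rfl
        rw [h4, map_pow]
        show (Multiplicative.ofAdd (Submodule.Quotient.mk _)) ^ p = 1
        rw [← ofAdd_nsmul, psmul_zero]
        rfl
    -- now x = c * y * c⁻¹
    refine ⟨⟨c * y * c⁻¹, Subgroup.Normal.conj_mem ‹H.Normal› _ hyH c⟩, ?_, rfl⟩
    show _ ∈ (phi0 p G H).ker
    rw [MonoidHom.mem_ker]
    have := phi0_conj p G H c ⟨y, hyH⟩
    rw [this, hyker]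
  rcases hM ha with ⟨b, hb, hba⟩
  have : b = a := Subtype.ext hba
  rw [← this]
  exact hb

/-- `φ : Hbar →ₗ C₁(G)/B2` -/
noncomputable def phibar : Hbar p G H →ₗ[ZMod p] ((G →₀ ZMod p) ⧸ B2 p G H) :=
  (MonoidHom.toAdditiveLeft (QuotientGroup.lift (LH p G H) (phi0 p G H)
    (fun x hx => phi0_LL p G H (Subgroup.mem_subgroupOf.mp hx)))).toZModLinearMap p

lemma phibar_mkg {a : G} (ha : a ∈ H) :
    phibar p G H (mkg p G H a)
      = Submodule.Quotient.mk (Finsupp.single a (1 : ZMod p) - Finsupp.single 1 1) := by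
  rw [mkg_of_mem p G H ha]
  rfl

/-- a linear section `C₁(G/H) → C₁(G)` -/
noncomputable def s1 : ((G ⧸ H) →₀ ZMod p) →ₗ[ZMod p] (G →₀ ZMod p) :=
  Finsupp.lmapDomain (ZMod p) (ZMod p) (sec G H)

lemma theta_eq : ((B2 p G H).mkQ).comp (LinearMap.id - (s1 p G H).comp (pi1 p G H))
    = (phibar p G H).comp (rho p G H) := by
  apply Finsupp.lhom_ext
  intro g b
  simp only [LinearMap.comp_apply, LinearMap.sub_apply, LinearMap.id_apply, s1, pi1,
    Finsupp.lmapDomain_apply, Finsupp.mapDomain_single, rho, lift_single, map_smul,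
    Submodule.mkQ_apply, map_sub]
  rw [phibar_mkg p G H (hgel_mem G H g)]
  rw [← Submodule.Quotient.mk_smul, ← Submodule.Quotient.mk_sub, Submodule.Quotient.eq]
  have hprod : sec G H ((QuotientGroup.mk' H) g) * hgel G H g = g := by unfold hgel; group
  have key := (B2 p G H).smul_mem b
    (B2_mul p G H (sec G H ((QuotientGroup.mk' H) g)) (hgel_mem G H g))
  rw [hprod] at key
  have : Finsupp.single g b - Finsupp.single (sec G H ((QuotientGroup.mk' H) g)) b
      - b • (Finsupp.single (hgel G H g) (1 : ZMod p) - Finsupp.single 1 1)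
      = -(b • (Finsupp.single (hgel G H g) (1 : ZMod p)
          + Finsupp.single (sec G H ((QuotientGroup.mk' H) g)) 1
          - Finsupp.single g 1 - Finsupp.single 1 1)) := by
    simp only [smul_sub, smul_add, Finsupp.smul_single, smul_eq_mul, mul_one]
    abel
  rw [this]
  exact neg_mem key

lemma main_ker {u : G →₀ ZMod p} (h1 : pi1 p G H u = 0) (h2 : rho p G H u = 0) :
    u ∈ B2 p G H := by
  have := LinearMap.congr_fun (theta_eq p G H) u
  simp only [LinearMap.comp_apply, LinearMap.sub_apply, LinearMap.id_apply, h1, h2, map_zero,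
    Submodule.mkQ_apply, sub_zero] at this
  rwa [← Submodule.Quotient.mk_eq_zero]

/-- `G → Gbar` -/
noncomputable def lam (g : G) : Gbar p G :=
  Additive.ofMul (QuotientGroup.mk g : G ⧸ DD p G)

lemma lam_mul (a b : G) : lam p G (a * b) = lam p G a + lam p G b := by
  show Additive.ofMul ((QuotientGroup.mk (a * b)) : G ⧸ DD p G) = _
  rw [QuotientGroup.mk_mul]
  rfl

lemma lam_inv (a : G) : lam p G a⁻¹ = - lam p G a := by
  have := lam_mul p G a⁻¹ a
  rw [inv_mul_cancel] at this
  have h1 : lam p G 1 = 0 := rfl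
  rw [h1] at this
  exact eq_neg_of_add_eq_zero_left this.symm

lemma lam_zero_iff (a : G) : lam p G a = 0 ↔ a ∈ DD p G := by
  show Additive.ofMul ((QuotientGroup.mk a) : G ⧸ DD p G) = 0 ↔ _
  rw [← QuotientGroup.eq_one_iff (N := DD p G) a]
  constructor
  · intro h; exact Additive.ofMul.injective (by rw [h]; rfl)
  · intro h; rw [h]; rfl

/-- `j : Hbar →ₗ Gbar` -/
noncomputable def jbar : Hbar p G H →ₗ[ZMod p] Gbar p G :=
  (MonoidHom.toAdditive (QuotientGroup.lift (LH p G H)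
    ((QuotientGroup.mk' (DD p G)).comp H.subtype)
    (fun x hx => by
      have : (x : G) ∈ DD p G := LL_le_DD p G H (Subgroup.mem_subgroupOf.mp hx)
      show (QuotientGroup.mk' (DD p G)) (x : G) = 1
      exact (QuotientGroup.eq_one_iff _).mpr this))).toZModLinearMap p

lemma jbar_mkg {a : G} (ha : a ∈ H) : jbar p G H (mkg p G H a) = lam p G a := by
  rw [mkg_of_mem p G H ha]
  rfl

/-- `μ : C₁(G/H) →ₗ Gbar` -/
noncomputable def mu : ((G ⧸ H) →₀ ZMod p) →ₗ[ZMod p] Gbar p G :=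
  Finsupp.lift (Gbar p G) (ZMod p) (G ⧸ H) fun x => lam p G (sec G H x)

lemma j_sig : (jbar p G H).comp (sig p G H) = (mu p G H).comp (barD2 (ZMod p) (G ⧸ H)) := by
  apply Finsupp.lhom_ext
  rintro ⟨x, y⟩ b
  simp only [LinearMap.comp_apply, sig, barD2, mu, lift_single, map_smul, map_sub, map_add]
  rw [jbar_mkg p G H (cel_mem G H x y)]
  have : lam p G (cel G H x y)
      = lam p G (sec G H x) + lam p G (sec G H y) - lam p G (sec G H (x * y)) := by
    unfold cel
    rw [lam_mul, lam_mul, lam_inv]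
    abel
  rw [this]
  module

/-- `π₃ : C₃(G) → C₃(G/H)` -/
noncomputable def pi3 : ((G × G × G) →₀ ZMod p) →ₗ[ZMod p] (((G ⧸ H) × (G ⧸ H) × (G ⧸ H)) →₀ ZMod p) :=
  Finsupp.lmapDomain (ZMod p) (ZMod p)
    (Prod.map (QuotientGroup.mk' H) (Prod.map (QuotientGroup.mk' H) (QuotientGroup.mk' H)))

lemma d3_pi : (barD3 (ZMod p) (G ⧸ H)).comp (pi3 p G H) = (pi2 p G H).comp (barD3 (ZMod p) G) := by
  apply Finsupp.lhom_ext
  intro a b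
  simp only [LinearMap.comp_apply, barD3, lift_single, pi2, pi3, Finsupp.lmapDomain_apply,
    Finsupp.mapDomain_single, map_add, map_sub, map_smul, Prod.map_apply, Prod.map_fst,
    Prod.map_snd, map_mul]

lemma range_d3_le : LinearMap.range (barD3 (ZMod p) G)
    ≤ Submodule.comap (pi2 p G H) (LinearMap.range (barD3 (ZMod p) (G ⧸ H))) := by
  rintro x ⟨v, rfl⟩
  refine ⟨pi3 p G H v, ?_⟩
  exact LinearMap.congr_fun (d3_pi p G H) v

/-- the induced map `C₂(G)/im d₃ → C₂(G/H)/im d₃` -/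
noncomputable def qmap : (((G × G) →₀ ZMod p) ⧸ LinearMap.range (barD3 (ZMod p) G))
    →ₗ[ZMod p] ((((G ⧸ H) × (G ⧸ H)) →₀ ZMod p) ⧸ LinearMap.range (barD3 (ZMod p) (G ⧸ H))) :=
  Submodule.mapQ _ _ (pi2 p G H) (range_d3_le p G H)

lemma psi_mem (x : ((G × G) →₀ ZMod p) ⧸ LinearMap.range (barD3 (ZMod p) G))
    (hx : x ∈ Submodule.map (LinearMap.range (barD3 (ZMod p) G)).mkQ (barZ2 (ZMod p) G)) :
    qmap p G H x ∈ Submodule.map (LinearMap.range (barD3 (ZMod p) (G ⧸ H))).mkQ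
      (barZ2 (ZMod p) (G ⧸ H)) := by
  obtain ⟨z, hz, rfl⟩ := hx
  refine ⟨pi2 p G H z, ?_, ?_⟩
  · show (barD2 (ZMod p) (G ⧸ H)) (pi2 p G H z) = 0
    have := LinearMap.congr_fun (d2_pi p G H) z
    simp only [LinearMap.comp_apply] at this
    rw [this]
    have hz0 : barD2 (ZMod p) G z = 0 := hz
    rw [hz0, map_zero]
  · rfl

/-- the induced map `ψ : H₂(G) → H₂(G/H)` -/
noncomputable def psi : GH2 (ZMod p) G →ₗ[ZMod p] GH2 (ZMod p) (G ⧸ H) :=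
  LinearMap.restrict (qmap p G H) (psi_mem p G H)

lemma sig_range_le : LinearMap.range (barD3 (ZMod p) (G ⧸ H)) ≤ LinearMap.ker (sig p G H) :=
  LinearMap.range_le_ker_iff.mpr (sig_d3 p G H)

/-- induced `σ` on `C₂/im d₃` -/
noncomputable def sigq : ((((G ⧸ H) × (G ⧸ H)) →₀ ZMod p) ⧸ LinearMap.range (barD3 (ZMod p) (G ⧸ H)))
    →ₗ[ZMod p] Hbar p G H :=
  Submodule.liftQ _ (sig p G H) (sig_range_le p G H)

/-- `σ̄ : H₂(G/H) → Hbar` -/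
noncomputable def sigbar : GH2 (ZMod p) (G ⧸ H) →ₗ[ZMod p] Hbar p G H :=
  (sigq p G H).comp (Submodule.subtype _)

lemma sig_pi2_cycle {z : (G × G) →₀ ZMod p} (hz : z ∈ barZ2 (ZMod p) G) :
    sig p G H (pi2 p G H z) = 0 := by
  have := LinearMap.congr_fun (rho_d2 p G H) z
  simp only [LinearMap.comp_apply, LinearMap.neg_apply] at this
  have hz0 : barD2 (ZMod p) G z = 0 := hz
  rw [hz0, map_zero] at this
  exact (neg_eq_zero.mp this.symm)

/-- `H ∩ D → H/[H,G]Hᵖ` -/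
noncomputable def iot : ↥(H ⊓ DD p G) →* (↥H ⧸ LH p G H) :=
  (QuotientGroup.mk' (LH p G H)).comp (Subgroup.inclusion inf_le_left)

/-- a linear section `C₂(G/H) → C₂(G)` -/
noncomputable def s2 : (((G ⧸ H) × (G ⧸ H)) →₀ ZMod p) →ₗ[ZMod p] ((G × G) →₀ ZMod p) :=
  Finsupp.lmapDomain (ZMod p) (ZMod p) (Prod.map (sec G H) (sec G H))

lemma pi2_s2 : (pi2 p G H).comp (s2 p G H) = LinearMap.id := by
  apply Finsupp.lhom_ext
  rintro ⟨x, y⟩ b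
  simp only [LinearMap.comp_apply, pi2, s2, Finsupp.lmapDomain_apply, Finsupp.mapDomain_single,
    Prod.map_apply, LinearMap.id_apply, sec_spec]

lemma ker_sigbar_eq : LinearMap.ker (sigbar p G H) = LinearMap.range (psi p G H) := by
  apply le_antisymm
  · rintro X hX
    obtain ⟨w, hw, hmk⟩ := X.2
    have hsig : sig p G H w = 0 := by
      have h0 : sigbar p G H X = 0 := hX
      have h1 : sigbar p G H X = sigq p G H X.1 := rfl
      rw [h1, ← hmk] at h0
      simpa [sigq, Submodule.liftQ_apply] using h0
    -- lift w
    set ztil := s2 p G H w with hztil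
    have hpi2 : pi2 p G H ztil = w := LinearMap.congr_fun (pi2_s2 p G H) w
    set u := barD2 (ZMod p) G ztil with hu
    have hPi1 : pi1 p G H u = 0 := by
      have := LinearMap.congr_fun (d2_pi p G H) ztil
      simp only [LinearMap.comp_apply] at this
      rw [hu, ← this, hpi2]
      exact hw
    have hRho : rho p G H u = 0 := by
      have := LinearMap.congr_fun (rho_d2 p G H) ztil
      simp only [LinearMap.comp_apply, LinearMap.neg_apply] at this
      rw [hu, this, hpi2, hsig, neg_zero]
    obtain ⟨y2, hy2ker, hy2⟩ := main_ker p G H hPi1 hRho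
    set z := ztil - y2 with hz
    have hzcyc : z ∈ barZ2 (ZMod p) G := by
      show barD2 (ZMod p) G z = 0
      rw [hz, map_sub, hy2, ← hu, sub_self]
    have hpi2z : pi2 p G H z = w := by
      rw [hz, map_sub, hpi2]
      have : pi2 p G H y2 = 0 := hy2ker
      rw [this, sub_zero]
    refine ⟨⟨(LinearMap.range (barD3 (ZMod p) G)).mkQ z, z, hzcyc, rfl⟩, ?_⟩
    apply Subtype.ext
    show qmap p G H ((LinearMap.range (barD3 (ZMod p) G)).mkQ z) = X.1
    have hq : qmap p G H ((LinearMap.range (barD3 (ZMod p) G)).mkQ z)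
        = (LinearMap.range (barD3 (ZMod p) (G ⧸ H))).mkQ (pi2 p G H z) := rfl
    rw [hq, hpi2z]
    exact hmk
  · rintro X ⟨Y, rfl⟩
    obtain ⟨z, hz, hmk⟩ := Y.2
    show sigbar p G H (psi p G H Y) = 0
    have hval : sigbar p G H (psi p G H Y) = sigq p G H (qmap p G H Y.1) := rfl
    rw [hval, ← hmk]
    have hq : qmap p G H ((LinearMap.range (barD3 (ZMod p) G)).mkQ z)
        = (LinearMap.range (barD3 (ZMod p) (G ⧸ H))).mkQ (pi2 p G H z) := rfl
    rw [hq]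
    have h2 : sigq p G H ((LinearMap.range (barD3 (ZMod p) (G ⧸ H))).mkQ (pi2 p G H z))
        = sig p G H (pi2 p G H z) := rfl
    rw [h2]
    exact sig_pi2_cycle p G H hz

lemma range_char (x : Hbar p G H) :
    x ∈ LinearMap.range (sigbar p G H) ↔ Additive.toMul x ∈ (iot p G H).range := by
  constructor
  · rintro ⟨X, rfl⟩
    obtain ⟨w, hw, hmk⟩ := X.2
    have hxw : sigbar p G H X = sig p G H w := by
      have h1 : sigbar p G H X = sigq p G H X.1 := rfl
      rw [h1, ← hmk]
      rfl
    have hj : jbar p G H (sig p G H w) = 0 := by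
      have := LinearMap.congr_fun (j_sig p G H) w
      simp only [LinearMap.comp_apply] at this
      rw [this]
      have hw0 : barD2 (ZMod p) (G ⧸ H) w = 0 := hw
      rw [hw0, map_zero]
    obtain ⟨h0, hh0⟩ := QuotientGroup.mk'_surjective (LH p G H) (Additive.toMul (sig p G H w))
    have hx : sig p G H w = mkg p G H (h0 : G) := by
      rw [mkg_of_mem p G H h0.2]
      have : ((⟨(h0 : G), h0.2⟩ : ↥H) : ↥H) = h0 := Subtype.ext rfl
      rw [this]
      exact (Additive.ofMul.apply_symm_apply _).symm ▸ (by
        have := hh0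
        exact (congrArg Additive.ofMul this).symm)
    have hlam : lam p G (h0 : G) = 0 := by
      rw [hx] at hj
      rwa [jbar_mkg p G H h0.2] at hj
    have hD : (h0 : G) ∈ DD p G := (lam_zero_iff p G _).mp hlam
    refine ⟨⟨(h0 : G), Subgroup.mem_inf.mpr ⟨h0.2, hD⟩⟩, ?_⟩
    show (QuotientGroup.mk' (LH p G H)) (Subgroup.inclusion inf_le_left _) = _
    have hincl : (Subgroup.inclusion (inf_le_left (a := H) (b := DD p G))
        ⟨(h0 : G), Subgroup.mem_inf.mpr ⟨h0.2, hD⟩⟩) = h0 := Subtype.ext rfl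
    rw [hincl, hxw, hh0]
  · rintro ⟨y, hy⟩
    have hH : (y : G) ∈ H := (Subgroup.mem_inf.mp y.2).1
    have hD : (y : G) ∈ DD p G := (Subgroup.mem_inf.mp y.2).2
    obtain ⟨z, hz⟩ := single_mem_range_d2 p G hD
    set w := Finsupp.single ((1 : G ⧸ H), (1 : G ⧸ H)) (1 : ZMod p) - pi2 p G H z with hwdef
    have hπh : (QuotientGroup.mk' H) (y : G) = 1 := (QuotientGroup.eq_one_iff _).mpr hH
    have hw : w ∈ barZ2 (ZMod p) (G ⧸ H) := by
      show barD2 (ZMod p) (G ⧸ H) w = 0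
      rw [hwdef, map_sub]
      have h1 : barD2 (ZMod p) (G ⧸ H) (Finsupp.single ((1 : G ⧸ H), (1 : G ⧸ H)) (1 : ZMod p))
          = Finsupp.single 1 1 := by
        simp only [barD2, lift_single, one_smul, one_mul]
        abel
      have h2 : barD2 (ZMod p) (G ⧸ H) (pi2 p G H z) = Finsupp.single 1 1 := by
        have := LinearMap.congr_fun (d2_pi p G H) z
        simp only [LinearMap.comp_apply] at this
        rw [this, hz]
        simp only [pi1, Finsupp.lmapDomain_apply, Finsupp.mapDomain_single, hπh]
      rw [h1, h2, sub_self]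
    have hsigw : sig p G H w = mkg p G H (y : G) := by
      rw [hwdef, map_sub]
      have h1 : sig p G H (Finsupp.single ((1 : G ⧸ H), (1 : G ⧸ H)) (1 : ZMod p))
          = mkg p G H (cel G H 1 1) := by
        simp only [sig, lift_single, one_smul]
      have h2 : sig p G H (pi2 p G H z) = -(mkg p G H (hgel G H (y : G))) := by
        have := LinearMap.congr_fun (rho_d2 p G H) z
        simp only [LinearMap.comp_apply, LinearMap.neg_apply] at this
        rw [hz] at this
        have h5 : rho p G H (Finsupp.single (y : G) (1 : ZMod p))
            = mkg p G H (hgel G H (y : G)) := by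
          simp only [rho, lift_single, one_smul]
        rw [h5] at this
        rw [this, neg_neg]
      have hc : cel G H 1 1 = sec G H 1 := by
        unfold cel
        rw [one_mul]
        group
      have hhg : hgel G H (y : G) = (sec G H 1)⁻¹ * (y : G) := by
        unfold hgel
        rw [hπh]
      rw [h1, h2, hc, hhg, mkg_mul p G H (inv_mem (sec_mem_H G H)) hH,
        mkg_inv p G H (sec_mem_H G H)]
      abel
    refine ⟨⟨(LinearMap.range (barD3 (ZMod p) (G ⧸ H))).mkQ w, w, hw, rfl⟩, ?_⟩
    show sig p G H w = x
    rw [hsigw]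
    have h3 : Additive.toMul (mkg p G H (y : G))
        = (QuotientGroup.mk' (LH p G H)) (⟨(y : G), hH⟩ : ↥H) := by
      rw [mkg_of_mem p G H hH]
      rfl
    have h4 : iot p G H y = (QuotientGroup.mk' (LH p G H)) (⟨(y : G), hH⟩ : ↥H) := by
      show (QuotientGroup.mk' (LH p G H)) (Subgroup.inclusion inf_le_left y) = _
      congr 1
    refine Additive.toMul.injective ?_
    rw [h3, ← h4, hy]

lemma ker_iot : (iot p G H).ker = (LL p G H).subgroupOf (H ⊓ DD p G) := by
  ext x
  rw [MonoidHom.mem_ker, Subgroup.mem_subgroupOf]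
  show (QuotientGroup.mk (Subgroup.inclusion inf_le_left x) : ↥H ⧸ LH p G H) = 1 ↔ _
  rw [QuotientGroup.eq_one_iff]
  show Subgroup.inclusion inf_le_left x ∈ (LL p G H).subgroupOf H ↔ _
  rw [Subgroup.mem_subgroupOf]
  rfl

/-- from the range of `σ̄` to the additive version of the range of `ι` -/
noncomputable def e2 : ↥(LinearMap.range (sigbar p G H)) ≃+ Additive ↥(iot p G H).range where
  toFun x := Additive.ofMul (α := ↥(iot p G H).range)
    ⟨Additive.toMul x.1, (range_char p G H x.1).mp x.2⟩
  invFun y := ⟨Additive.ofMul ((Additive.toMul y : ↥(iot p G H).range) : ↥H ⧸ LH p G H),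
    (range_char p G H _).mpr (Additive.toMul y).2⟩
  left_inv x := by apply Subtype.ext; rfl
  right_inv y := rfl
  map_add' a b := rfl

/-- The cokernel identification. -/
noncomputable def finalEquiv : ((GH2 (ZMod p) (G ⧸ H)) ⧸ LinearMap.range (psi p G H)) ≃+
    Additive (↥(H ⊓ DD p G) ⧸ (LL p G H).subgroupOf (H ⊓ DD p G)) := by
  refine AddEquiv.trans ?_ (AddEquiv.trans (e2 p G H) ?_)
  · exact ((Submodule.quotEquivOfEq _ _ (ker_sigbar_eq p G H).symm).trans
      (LinearMap.quotKerEquivRange (sigbar p G H))).toAddEquiv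
  · refine AddEquiv.trans (MulEquiv.toAdditive (QuotientGroup.quotientKerEquivRange (iot p G H)).symm) ?_
    exact MulEquiv.toAdditive (QuotientGroup.quotientMulEquivOfEq (ker_iot p G H))

lemma psi_spec (z : (G × G) →₀ ZMod p) (hz : z ∈ barZ2 (ZMod p) G)
    (w : ((G ⧸ H) × (G ⧸ H)) →₀ ZMod p) (hw : w ∈ barZ2 (ZMod p) (G ⧸ H))
    (hzw : Finsupp.mapDomain (Prod.map (QuotientGroup.mk' H) (QuotientGroup.mk' H)) z = w) :
    psi p G H ⟨(LinearMap.range (barD3 (ZMod p) G)).mkQ z, z, hz, rfl⟩ =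
      ⟨(LinearMap.range (barD3 (ZMod p) (G ⧸ H))).mkQ w, w, hw, rfl⟩ := by
  apply Subtype.ext
  show qmap p G H ((LinearMap.range (barD3 (ZMod p) G)).mkQ z) = _
  have hq : qmap p G H ((LinearMap.range (barD3 (ZMod p) G)).mkQ z)
      = (LinearMap.range (barD3 (ZMod p) (G ⧸ H))).mkQ (pi2 p G H z) := rfl
  rw [hq]
  have : pi2 p G H z = w := hzw
  rw [this]

end Quot
end HopfAux

end

/-- mod-`p` Hopf formula: for a group `G` with normal subgroup `H` there is an exact sequence
`H₂(G,ℤ/p) → H₂(G/H,ℤ/p) → (H ∩ [G,G]Gᵖ)/([H,G]Hᵖ) → 0`, where the first map is induced by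
the projection `G → G/H`.  Exactness is expressed by: the cokernel of the induced map `ψ` is
isomorphic (as an abelian group) to `(H ∩ [G,G]Gᵖ)/([H,G]Hᵖ)`. -/
theorem stmt7 (p : ℕ) (hp : p.Prime) (G : Type) [Group G] (H : Subgroup G) [H.Normal] :
    ∃ ψ : GH2 (ZMod p) G →ₗ[ZMod p] GH2 (ZMod p) (G ⧸ H),
      (∀ (z : (G × G) →₀ ZMod p) (hz : z ∈ barZ2 (ZMod p) G)
         (w : ((G ⧸ H) × (G ⧸ H)) →₀ ZMod p) (hw : w ∈ barZ2 (ZMod p) (G ⧸ H)),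
         Finsupp.mapDomain (Prod.map (QuotientGroup.mk' H) (QuotientGroup.mk' H)) z = w →
         ψ ⟨(LinearMap.range (barD3 (ZMod p) G)).mkQ z, z, hz, rfl⟩ =
           ⟨(LinearMap.range (barD3 (ZMod p) (G ⧸ H))).mkQ w, w, hw, rfl⟩) ∧
      Nonempty ((GH2 (ZMod p) (G ⧸ H) ⧸ LinearMap.range ψ) ≃+
        Additive ((H ⊓ (⁅(⊤ : Subgroup G), (⊤ : Subgroup G)⁆ ⊔
            Subgroup.closure {x : G | ∃ g : G, x = g ^ p}) : Subgroup G) ⧸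
          (Subgroup.normalClosure
            ({x : G | ∃ h ∈ H, ∃ g : G, x = ⁅h, g⁆} ∪
             {x : G | ∃ h ∈ H, x = h ^ p})).subgroupOf
            (H ⊓ (⁅(⊤ : Subgroup G), (⊤ : Subgroup G)⁆ ⊔
              Subgroup.closure {x : G | ∃ g : G, x = g ^ p})))) := by
  refine ⟨HopfAux.psi p G H, ?_, ⟨HopfAux.finalEquiv p G H⟩⟩
  intro z hz w hw hzw
  exact HopfAux.psi_spec p G H z hz w hw hzw
end
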